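/- arXiv:1012.5745 — 5 statements merged into one kernel-verified Lean document; each statement's English description precedes it below -/
import Mathlib

section
/- Let K = ℚ(√p₁, √p₂, ...) be the subfield of ℝ generated over ℚ by the square roots of an infinite strictly increasing sequence of primes p₁ < p₂ < ..., and for each i let fᵢ : K → K be the ℚ-automorphism sending √pᵢ to −√pᵢ and fixing √pⱼ for j ≠ i. Then for x ∈ K, fᵢ(x) = x for all i ∈ ℕ if and only if x ∈ ℚ. -/
open Subfield

/-- If `a ^ 2` lies in the closure of `S`, every element of the closure of `insert a S`
has the form `u + v * a` with `u, v` in the closure of `S`. -/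
theorem aux_quadratic {F : Type*} [Field F] (S : Set F) (a : F)
    (ha : a ^ 2 ∈ Subfield.closure S) {x : F} (hx : x ∈ Subfield.closure (insert a S)) :
    ∃ u ∈ Subfield.closure S, ∃ v ∈ Subfield.closure S, x = u + v * a := by
  set F₀ := Subfield.closure S with hF₀
  let T : Subfield F :=
    { carrier := {x | ∃ u ∈ F₀, ∃ v ∈ F₀, x = u + v * a}
      zero_mem' := ⟨0, zero_mem _, 0, zero_mem _, by ring⟩
      one_mem' := ⟨1, one_mem _, 0, zero_mem _, by ring⟩
      add_mem' := by
        rintro x y ⟨u, hu, v, hv, rfl⟩ ⟨u', hu', v', hv', rfl⟩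
        exact ⟨u + u', add_mem hu hu', v + v', add_mem hv hv', by ring⟩
      neg_mem' := by
        rintro x ⟨u, hu, v, hv, rfl⟩
        exact ⟨-u, neg_mem hu, -v, neg_mem hv, by ring⟩
      mul_mem' := by
        rintro x y ⟨u, hu, v, hv, rfl⟩ ⟨u', hu', v', hv', rfl⟩
        exact ⟨u * u' + v * v' * a ^ 2, add_mem (mul_mem hu hu') (mul_mem (mul_mem hv hv') ha),
          u * v' + v * u', add_mem (mul_mem hu hv') (mul_mem hv hu'), by ring⟩
      inv_mem' := by
        rintro x ⟨u, hu, v, hv, rfl⟩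
        by_cases haF : a ∈ F₀
        · exact ⟨(u + v * a)⁻¹, inv_mem (add_mem hu (mul_mem hv haF)), 0, zero_mem _, by ring⟩
        by_cases hx0 : u + v * a = 0
        · rw [hx0]
          exact ⟨0, zero_mem _, 0, zero_mem _, by ring⟩
        by_cases hv0 : v = 0
        · exact ⟨u⁻¹, inv_mem hu, 0, zero_mem _, by rw [hv0]; ring⟩
        have hx0' : u - v * a ≠ 0 := by
          intro h
          apply haF
          have : a = u / v := by
            rw [eq_div_iff hv0]
            linear_combination -h
          rw [this]; exact div_mem hu hv
        have hd : u ^ 2 - v ^ 2 * a ^ 2 ≠ 0 := by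
          intro h; apply hx0
          have : (u + v * a) * (u - v * a) = 0 := by rw [← h]; ring
          rcases mul_eq_zero.mp this with h' | h'
          · exact h'
          · exact absurd h' hx0'
        have hdF : u ^ 2 - v ^ 2 * a ^ 2 ∈ F₀ :=
          sub_mem (pow_mem hu 2) (mul_mem (pow_mem hv 2) ha)
        refine ⟨u / (u ^ 2 - v ^ 2 * a ^ 2), div_mem hu hdF,
          -v / (u ^ 2 - v ^ 2 * a ^ 2), div_mem (neg_mem hv) hdF, ?_⟩
        field_simp
        ring }
  have hT : Subfield.closure (insert a S) ≤ T := by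
    rw [Subfield.closure_le]
    rintro y (rfl | hy)
    · exact ⟨0, zero_mem _, 1, one_mem _, by ring⟩
    · exact ⟨y, subset_closure hy, 0, zero_mem _, by ring⟩
  exact hT hx

/-- Abstract version: in a characteristic-zero field, if `g` is a family of nonzero
elements whose squares lie in every subfield, and `f i` are automorphisms negating `g i`
and fixing `g j` for `j ≠ i`, then any element of the closure of the range of `g` fixed
by all `f i` is rational. -/
theorem aux_main {K : Type*} [Field K] [CharZero K] (g : ℕ → K) (f : ℕ → K ≃+* K)
    (hg2 : ∀ (a : ℕ) (s : Set K), g a ^ 2 ∈ Subfield.closure s) (hgne : ∀ a, g a ≠ 0)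
    (hfne : ∀ i j, j ≠ i → f i (g j) = g j) (hfe : ∀ i, f i (g i) = -(g i))
    (x : K) (hx : x ∈ Subfield.closure (Set.range g)) (hfix : ∀ i, f i x = x) :
    x ∈ (Rat.castHom K).fieldRange := by
  -- x lies in the closure of a finite subset
  have hfin : ∃ s : Finset ℕ, x ∈ Subfield.closure (g '' ↑s) := by
    refine Subfield.closure_induction ?_ ?_ ?_ ?_ ?_ ?_ hx
    · rintro y ⟨i, rfl⟩
      exact ⟨{i}, Subfield.subset_closure ⟨i, by simp⟩⟩
    · exact ⟨∅, one_mem _⟩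
    · rintro y z _ _ ⟨s, hs⟩ ⟨t, ht⟩
      refine ⟨s ∪ t, add_mem ?_ ?_⟩
      · exact Subfield.closure_mono (Set.image_mono (by simp)) hs
      · exact Subfield.closure_mono (Set.image_mono (by simp)) ht
    · rintro y _ ⟨s, hs⟩
      exact ⟨s, neg_mem hs⟩
    · rintro y _ ⟨s, hs⟩
      exact ⟨s, inv_mem hs⟩
    · rintro y z _ _ ⟨s, hs⟩ ⟨t, ht⟩
      refine ⟨s ∪ t, mul_mem ?_ ?_⟩
      · exact Subfield.closure_mono (Set.image_mono (by simp)) hs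
      · exact Subfield.closure_mono (Set.image_mono (by simp)) ht
  have main : ∀ s : Finset ℕ, ∀ y : K, y ∈ Subfield.closure (g '' ↑s) →
      (∀ i, f i y = y) → y ∈ (Rat.castHom K).fieldRange := by
    intro s
    induction s using Finset.induction_on with
    | empty =>
      intro y hy _
      have hle : Subfield.closure (g '' (↑(∅ : Finset ℕ))) ≤ (Rat.castHom K).fieldRange := by
        rw [Finset.coe_empty, Set.image_empty, Subfield.closure_le]
        exact Set.empty_subset _
      exact hle hy
    | insert a t ha ih =>
      intro y hy hfixy
      rw [Finset.coe_insert, Set.image_insert_eq] at hy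
      obtain ⟨u, hu, v, hv, rfl⟩ := aux_quadratic _ (g a) (hg2 a _) hy
      have hfixcl : ∀ z ∈ Subfield.closure (g '' ↑t), f a z = z := by
        intro z hz
        have heq : Set.EqOn ((f a : K →+* K)) (RingHom.id K) (g '' ↑t) := by
          rintro w ⟨j, hj, rfl⟩
          exact hfne a j (fun h => ha (h ▸ hj))
        exact RingHom.eqOn_field_closure heq hz
      have hEq := hfixy a
      rw [map_add, map_mul, hfixcl u hu, hfixcl v hv, hfe a] at hEq
      have h2 : (2 : K) * (v * g a) = 0 := by linear_combination -hEq
      have hvga : v * g a = 0 := by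
        rcases mul_eq_zero.mp h2 with h | h
        · exact absurd h two_ne_zero
        · exact h
      have hv0 : v = 0 := by
        rcases mul_eq_zero.mp hvga with h | h
        · exact h
        · exact absurd h (hgne a)
      have hyu : u + v * g a = u := by rw [hv0]; ring
      rw [hyu]
      exact ih u hu (by rw [← hyu]; exact hfixy)
  obtain ⟨s, hs⟩ := hfin
  exact main s x hs hfix

/-- For `K = ℚ(√p₁, √p₂, …)` with `p₁ < p₂ < ⋯` primes and `fᵢ` the ℚ-automorphism of `K`
negating `√pᵢ` and fixing the other `√pⱼ`, an element `x ∈ K` is fixed by all `fᵢ` iff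
`x ∈ ℚ`. -/
theorem stmt0 (p : ℕ → ℕ) (hp : ∀ i, Nat.Prime (p i)) (hmono : StrictMono p)
    (f : ℕ → (Subfield.closure (Set.range fun i => Real.sqrt (p i)) ≃+*
      Subfield.closure (Set.range fun i => Real.sqrt (p i))))
    (hf : ∀ i j, ((f i ⟨Real.sqrt (p j), Subfield.subset_closure (Set.mem_range_self j)⟩ :
        Subfield.closure (Set.range fun i => Real.sqrt (p i))) : ℝ) =
      if j = i then -Real.sqrt (p i) else Real.sqrt (p j))
    (x : Subfield.closure (Set.range fun i => Real.sqrt (p i))) :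
    (∀ i, f i x = x) ↔ ∃ q : ℚ, (x : ℝ) = q := by
  constructor
  · intro hfix
    set g : ℕ → (Subfield.closure (Set.range fun i => Real.sqrt (p i))) := fun j =>
      ⟨Real.sqrt (p j), Subfield.subset_closure (Set.mem_range_self j)⟩ with hgdef
    -- x lies in the closure (inside K) of the range of g
    have hxmem : x ∈ Subfield.closure (Set.range g) := by
      have hmap : (Subfield.closure (Set.range g)).map
            (Subfield.closure (Set.range fun i => Real.sqrt (p i))).subtype =
          Subfield.closure
            ((Subfield.closure (Set.range fun i => Real.sqrt (p i))).subtype '' Set.range g) :=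
        RingHom.map_field_closure _ _
      have himg : (Subfield.closure (Set.range fun i => Real.sqrt (p i))).subtype ''
          Set.range g = Set.range fun i => Real.sqrt (p i) := by
        rw [← Set.range_comp]
        rfl
      have hx2 : (x : ℝ) ∈ (Subfield.closure (Set.range g)).map
          (Subfield.closure (Set.range fun i => Real.sqrt (p i))).subtype := by
        rw [hmap, himg]
        exact x.2
      obtain ⟨y, hy, hyx⟩ := Subfield.mem_map.mp hx2
      have : y = x := Subtype.ext hyx
      exact this ▸ hy
    have hg2 : ∀ (a : ℕ) (s : Set (Subfield.closure (Set.range fun i => Real.sqrt (p i)))),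
        (g a) ^ 2 ∈ Subfield.closure s := by
      intro a s
      have : (g a) ^ 2 = ((p a : ℕ) : _) := by
        apply Subtype.ext
        push_cast
        exact Real.sq_sqrt (Nat.cast_nonneg _)
      rw [this]
      exact natCast_mem _ _
    have hgne : ∀ a : ℕ, g a ≠ 0 := by
      intro a h
      have h0 : Real.sqrt (p a) = 0 := congrArg Subtype.val h
      have hpos : (0 : ℝ) < Real.sqrt (p a) :=
        Real.sqrt_pos.mpr (by exact_mod_cast (hp a).pos)
      exact hpos.ne' h0
    have hfne : ∀ i j, j ≠ i → f i (g j) = g j := by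
      intro i j hji
      apply Subtype.ext
      have := hf i j
      rw [if_neg hji] at this
      exact this
    have hfe : ∀ i, f i (g i) = -(g i) := by
      intro i
      apply Subtype.ext
      have := hf i i
      rw [if_pos rfl] at this
      rw [this]
      push_cast
      rfl
    have hchar : CharZero (Subfield.closure (Set.range fun i => Real.sqrt (p i))) :=
      ⟨fun a b h => Nat.cast_injective (R := ℝ) (by exact_mod_cast congrArg Subtype.val h)⟩
    obtain ⟨q, hq⟩ := RingHom.mem_fieldRange.mp
      (aux_main g f hg2 hgne hfne hfe x hxmem hfix)
    refine ⟨q, ?_⟩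
    rw [← hq]
    push_cast
    rfl
  · rintro ⟨q, hq⟩ i
    have hx : x = (q : _) := by
      apply Subtype.ext
      rw [hq]
      push_cast
      rfl
    rw [hx]
    exact map_ratCast (f i) q
end

section
/- Let D be a division ring strongly algebraic over its center F, and T a finite subset of D. Then there exists a division subring of D containing F ∪ T which is centrally finite (finite-dimensional over its own center). -/
universe u

/-- A subring of a division ring that is closed under inverses, i.e. a division subring. -/
def IsDivisionSubring {D : Type u} [DivisionRing D] (E : Subring D) : Prop :=
  ∀ x ∈ E, x⁻¹ ∈ E

/-- The division subring of `D` generated by a set `S`. -/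
def divClosure (D : Type u) [DivisionRing D] (S : Set D) : Subring D :=
  sInf {E : Subring D | S ⊆ E ∧ IsDivisionSubring E}

/-- A maximal subfield of a division ring `D`: a commutative division subring containing the
center which is maximal among commutative division subrings. -/
def IsMaximalSubfield (D : Type u) [DivisionRing D] (K : Subring D) : Prop :=
  IsDivisionSubring K ∧ (∀ x ∈ K, ∀ y ∈ K, x * y = y * x) ∧ Subring.center D ≤ K ∧
    ∀ K' : Subring D, IsDivisionSubring K' → (∀ x ∈ K', ∀ y ∈ K', x * y = y * x) →
      K ≤ K' → K' = K

/-- A division ring is centrally finite if it is a finite-dimensional vector space over its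
center. -/
def IsCentrallyFinite (D : Type u) [DivisionRing D] : Prop :=
  Module.Finite (Subring.center D) D

/-- A division ring `D` is strongly algebraic over its center `F` if it is algebraic over `F`
and it has a maximal subfield `K = F(S)` such that every `x ∈ D` fails to commute with only
finitely many elements of `S`. -/
def IsStronglyAlgebraic (D : Type u) [DivisionRing D] : Prop :=
  (∀ a : D, IsAlgebraic (Subring.center D) a) ∧
  ∃ (K : Subring D) (S : Set D), IsMaximalSubfield D K ∧ S ⊆ K ∧
    K = divClosure D ((Subring.center D : Set D) ∪ S) ∧
    ∀ x : D, {y ∈ S | x * y ≠ y * x}.Finite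

/-- An embedding of a ring into some centrally finite division ring. -/
structure CFEmbedding (R : Type u) [Ring R] : Type (u + 1) where
  L : Type u
  [instL : DivisionRing L]
  f : R →+* L
  inj : Function.Injective f
  cf : IsCentrallyFinite L

/-- A division ring is locally linear if every finite subset is contained in a division
subring that embeds in some centrally finite division ring. -/
def IsLocallyLinear (D : Type u) [DivisionRing D] : Prop :=
  ∀ S : Finset D, ∃ E : Subring D, (S : Set D) ⊆ E ∧ IsDivisionSubring E ∧
    Nonempty (CFEmbedding E)

/-- A subgroup is subnormal if there is a finite chain of successively normal subgroups
reaching the whole group. -/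
def IsSubnormal {G : Type u} [Group G] (N : Subgroup G) : Prop :=
  ∃ (n : ℕ) (c : ℕ → Subgroup G), c 0 = N ∧ c n = ⊤ ∧
    ∀ i < n, c i ≤ c (i + 1) ∧ ∀ x ∈ c (i + 1), ∀ h ∈ c i, x * h * x⁻¹ ∈ c i

/-- A division subring `E` of `D` is centrally finite if `E` is spanned over its own center by
finitely many elements. -/
def IsCentrallyFiniteSubring {D : Type u} [DivisionRing D] (E : Subring D) : Prop :=
  ∃ B : Finset D, (B : Set D) ⊆ E ∧ ∀ x ∈ E, ∃ c : D → D,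
    (∀ b ∈ B, c b ∈ E ∧ ∀ y ∈ E, c b * y = y * c b) ∧ x = ∑ b ∈ B, c b * b

variable {D : Type u} [DivisionRing D]

lemma subset_divClosure (S : Set D) : S ⊆ divClosure D S := by
  intro x hx
  simp only [SetLike.mem_coe]
  rw [divClosure, Subring.mem_sInf]
  exact fun E hE => hE.1 hx

lemma divClosure_le {S : Set D} {E : Subring D} (hS : S ⊆ E) (hE : IsDivisionSubring E) :
    divClosure D S ≤ E := sInf_le ⟨hS, hE⟩

lemma divClosure_isDivisionSubring (S : Set D) : IsDivisionSubring (divClosure D S) := by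
  intro x hx
  rw [divClosure, Subring.mem_sInf] at hx ⊢
  exact fun E hE => hE.2 _ (hx E hE)

lemma divClosure_mono {S S' : Set D} (h : S ⊆ S') : divClosure D S ≤ divClosure D S' :=
  divClosure_le (h.trans (subset_divClosure S')) (divClosure_isDivisionSubring S')

lemma centralizer_isDivisionSubring (s : Set D) : IsDivisionSubring (Subring.centralizer s) := by
  intro x hx
  rw [Subring.mem_centralizer_iff] at hx ⊢
  intro g hg
  exact (Commute.inv_right₀ (hx g hg)).eq

lemma mem_of_centralizes {K : Subring D} (hK : IsMaximalSubfield D K) {x : D}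
    (hx : ∀ k ∈ K, x * k = k * x) : x ∈ K := by
  have hsubA : ((K : Set D) ∪ {x}) ⊆ (Subring.centralizer ((K : Set D) ∪ {x}) : Set D) := by
    rintro g (hg | hg)
    · show g ∈ Subring.centralizer ((K : Set D) ∪ {x})
      rw [Subring.mem_centralizer_iff]
      rintro g' (hg' | hg')
      · exact hK.2.1 g' hg' g hg
      · rw [Set.mem_singleton_iff] at hg'; subst hg'
        exact hx g hg
    · rw [Set.mem_singleton_iff] at hg; subst hg
      show g ∈ Subring.centralizer ((K : Set D) ∪ {g})
      rw [Subring.mem_centralizer_iff]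
      rintro g' (hg' | hg')
      · exact (hx g' hg').symm
      · rw [Set.mem_singleton_iff] at hg'; subst hg'; rfl
  have hsubB : ((K : Set D) ∪ {x}) ⊆
      (Subring.centralizer ((Subring.centralizer ((K : Set D) ∪ {x}) : Subring D) : Set D) : Set D) := by
    intro g hg
    show g ∈ Subring.centralizer _
    rw [Subring.mem_centralizer_iff]
    intro a ha
    rw [SetLike.mem_coe, Subring.mem_centralizer_iff] at ha
    exact (ha g hg).symm
  have hKx_le_A := divClosure_le hsubA (centralizer_isDivisionSubring _)
  have hKx_le_B := divClosure_le hsubB (centralizer_isDivisionSubring _)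
  have hcomm : ∀ u ∈ divClosure D ((K : Set D) ∪ {x}), ∀ w ∈ divClosure D ((K : Set D) ∪ {x}),
      u * w = w * u := by
    intro u hu w hw
    have hu' := hKx_le_B hu
    rw [Subring.mem_centralizer_iff] at hu'
    exact (hu' w (hKx_le_A hw)).symm
  have hKle : K ≤ divClosure D ((K : Set D) ∪ {x}) := by
    intro k hk
    exact subset_divClosure _ (Or.inl hk)
  have := hK.2.2.2 _ (divClosure_isDivisionSubring _) hcomm hKle
  rw [← this]
  exact subset_divClosure _ (Or.inr rfl)

section Density

variable {E K : Subring D}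
variable {n : ℕ} {k' : Fin n → D}

/-- The operator `x ↦ ∑ i, k' i * x * a i` as a `K`-linear map. -/
def opL (hKcomm : ∀ x ∈ K, ∀ y ∈ K, x * y = y * x) (hk' : ∀ i, k' i ∈ K)
    (a : Fin n → D) : D →ₗ[K] D where
  toFun x := ∑ i, k' i * x * a i
  map_add' x y := by
    simp only [mul_add, add_mul, Finset.sum_add_distrib]
  map_smul' c x := by
    simp only [RingHom.id_apply]
    have hc : (c : D) ∈ K := c.2
    show ∑ i, k' i * ((c : D) * x) * a i = (c : D) * ∑ i, k' i * x * a i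
    rw [Finset.mul_sum]
    refine Finset.sum_congr rfl fun i _ => ?_
    rw [← mul_assoc, hKcomm _ (hk' i) _ hc, mul_assoc, mul_assoc, mul_assoc]

lemma op_k_mul (hKcomm : ∀ x ∈ K, ∀ y ∈ K, x * y = y * x) (hk' : ∀ i, k' i ∈ K)
    (a : Fin n → D) {k : D} (hk : k ∈ K) (y : D) :
    ∑ i, k' i * (k * y) * a i = k * ∑ i, k' i * y * a i := by
  rw [Finset.mul_sum]
  refine Finset.sum_congr rfl fun i _ => ?_
  rw [← mul_assoc, hKcomm _ (hk' i) _ hk, mul_assoc, mul_assoc, mul_assoc]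

lemma op_mem (hKE : K ≤ E) (hk' : ∀ i, k' i ∈ K) {a : Fin n → D} (ha : ∀ i, a i ∈ E)
    {x : D} (hx : x ∈ E) : (∑ i, k' i * x * a i) ∈ E :=
  Subring.sum_mem _ fun i _ => Subring.mul_mem _ (Subring.mul_mem _ (hKE (hk' i)) hx) (ha i)

lemma op_rho (hKE : K ≤ E)
    (hspan : ∀ c ∈ K, ∃ z : Fin n → D,
      (∀ i, z i ∈ E ∧ ∀ y ∈ E, z i * y = y * z i) ∧ c = ∑ i, z i * k' i)
    {e : D} (he : e ∈ E) (hk' : ∀ i, k' i ∈ K) :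
    ∃ a : Fin n → D, (∀ i, a i ∈ E) ∧ ∀ x ∈ E, ∑ i, k' i * x * a i = x * e := by
  obtain ⟨z, hz, h1⟩ := hspan 1 (Subring.one_mem K)
  refine ⟨fun i => e * z i, fun i => Subring.mul_mem _ he (hz i).1, fun x hx => ?_⟩
  have hterm : ∀ i, k' i * x * (e * z i) = z i * k' i * (x * e) := by
    intro i
    have hmem : k' i * x * e ∈ E :=
      Subring.mul_mem _ (Subring.mul_mem _ (hKE (hk' i)) hx) he
    have hcm := ((hz i).2 _ hmem).symm
    calc k' i * x * (e * z i) = (k' i * x * e) * z i := (mul_assoc _ e (z i)).symm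
    _ = z i * (k' i * x * e) := hcm
    _ = z i * k' i * (x * e) := by simp only [mul_assoc]
  rw [Finset.sum_congr rfl fun i _ => hterm i, ← Finset.sum_mul, ← h1, one_mul]

lemma density (hKE : K ≤ E) (hEdiv : IsDivisionSubring E)
    (hKcomm : ∀ x ∈ K, ∀ y ∈ K, x * y = y * x)
    (hCEK : ∀ x ∈ E, (∀ k ∈ K, x * k = k * x) → x ∈ K)
    (hk' : ∀ i, k' i ∈ K)
    (hspan : ∀ c ∈ K, ∃ z : Fin n → D,
      (∀ i, z i ∈ E ∧ ∀ y ∈ E, z i * y = y * z i) ∧ c = ∑ i, z i * k' i) :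
    ∀ (m : ℕ) (v : Fin m → D), (∀ j, v j ∈ E) → ∀ x, x ∈ E →
      x ∉ Submodule.span K (Set.range v) →
      ∃ a : Fin n → D, (∀ i, a i ∈ E) ∧ (∀ j, ∑ i, k' i * v j * a i = 0) ∧
        ∑ i, k' i * x * a i = 1 := by
  intro m
  induction m with
  | zero =>
    intro v hv x hx hxspan
    have hx0 : x ≠ 0 := by
      rintro rfl
      exact hxspan (Submodule.zero_mem _)
    obtain ⟨a, ha, hrho⟩ := op_rho hKE hspan (hEdiv x hx) hk'
    exact ⟨a, ha, fun j => j.elim0, by rw [hrho x hx, mul_inv_cancel₀ hx0]⟩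
  | succ m ih =>
    intro v hv x hx hxspan
    have hv' : ∀ j, Fin.tail v j ∈ E := fun j => hv j.succ
    have hrange : Set.range v = insert (v 0) (Set.range (Fin.tail v)) := by
      ext y; constructor
      · rintro ⟨j, rfl⟩
        refine Fin.cases ?_ ?_ j
        · exact Set.mem_insert _ _
        · intro j'; exact Set.mem_insert_of_mem _ ⟨j', rfl⟩
      · rintro (h | ⟨j', rfl⟩)
        · exact ⟨0, h.symm⟩
        · exact ⟨j'.succ, rfl⟩
    by_cases hw : v 0 ∈ Submodule.span K (Set.range (Fin.tail v))
    · have hx' : x ∉ Submodule.span K (Set.range (Fin.tail v)) := by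
        intro hmem
        apply hxspan
        rw [hrange, Submodule.span_insert_eq_span hw]
        exact hmem
      obtain ⟨a, ha, hzero, hone⟩ := ih (Fin.tail v) hv' x hx hx'
      refine ⟨a, ha, ?_, hone⟩
      intro j
      refine Fin.cases ?_ (fun j' => hzero j') j
      have hker : Submodule.span K (Set.range (Fin.tail v)) ≤
          LinearMap.ker (opL hKcomm hk' a) := by
        rw [Submodule.span_le]
        rintro y ⟨j', rfl⟩
        exact hzero j'
      exact hker hw
    · obtain ⟨a₀, ha₀, hzero₀, hone₀⟩ := ih (Fin.tail v) hv' (v 0) (hv 0) hw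
      by_cases hA : ∃ a : Fin n → D, (∀ i, a i ∈ E) ∧
          (∀ j, ∑ i, k' i * Fin.tail v j * a i = 0) ∧
          (∑ i, k' i * v 0 * a i = 0) ∧ (∑ i, k' i * x * a i ≠ 0)
      · obtain ⟨a, ha, hz1, hz2, hnz⟩ := hA
        have htE : (∑ i, k' i * x * a i)⁻¹ ∈ E := hEdiv _ (op_mem hKE hk' ha hx)
        have hdist : ∀ y : D, ∑ i, k' i * y * (a i * (∑ i, k' i * x * a i)⁻¹) =
            (∑ i, k' i * y * a i) * (∑ i, k' i * x * a i)⁻¹ := by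
          intro y
          rw [Finset.sum_mul]
          exact Finset.sum_congr rfl fun i _ => (mul_assoc _ (a i) _).symm
        refine ⟨fun i => a i * (∑ i, k' i * x * a i)⁻¹,
          fun i => Subring.mul_mem _ (ha i) htE, ?_, ?_⟩
        · intro j
          refine Fin.cases ?_ (fun j' => ?_) j
          · rw [hdist, hz2, zero_mul]
          · rw [hdist]
            have : ∑ i, k' i * v j'.succ * a i = 0 := hz1 j'
            rw [this, zero_mul]
        · rw [hdist, mul_inv_cancel₀ hnz]
      · push_neg at hA
        have hcE : (∑ i, k' i * x * a₀ i) ∈ E := op_mem hKE hk' ha₀ hx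
        have claim1 : ∀ a : Fin n → D, (∀ i, a i ∈ E) →
            (∀ j, ∑ i, k' i * Fin.tail v j * a i = 0) →
            ∑ i, k' i * x * a i = (∑ i, k' i * x * a₀ i) * ∑ i, k' i * v 0 * a i := by
          intro a ha hz
          have htE : (∑ i, k' i * v 0 * a i) ∈ E := op_mem hKE hk' ha (hv 0)
          have hdist : ∀ y : D, ∑ i, k' i * y * (a i - a₀ i * ∑ i, k' i * v 0 * a i) =
              (∑ i, k' i * y * a i) -
                (∑ i, k' i * y * a₀ i) * ∑ i, k' i * v 0 * a i := by
            intro y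
            rw [Finset.sum_mul, ← Finset.sum_sub_distrib]
            refine Finset.sum_congr rfl fun i _ => ?_
            rw [mul_sub, ← mul_assoc (k' i * y) (a₀ i)]
          have h0 := hA (fun i => a i - a₀ i * ∑ i, k' i * v 0 * a i)
            (fun i => Subring.sub_mem _ (ha i) (Subring.mul_mem _ (ha₀ i) htE))
            (fun j => by rw [hdist, hz j, hzero₀ j, zero_mul, sub_zero])
            (by rw [hdist, hone₀, one_mul, sub_self])
          rw [hdist] at h0
          exact sub_eq_zero.mp h0
        have hcK : (∑ i, k' i * x * a₀ i) ∈ K := by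
          refine hCEK _ hcE fun k hk => ?_
          have hzs := fun i => hspan (k' i * k) (Subring.mul_mem _ (hk' i) hk)
          choose z hzprop hzrepr using hzs
          have ha'E : ∀ l, (∑ i, z i l * a₀ i) ∈ E :=
            fun l => Subring.sum_mem _ fun i _ => Subring.mul_mem _ (hzprop i l).1 (ha₀ i)
          have key : ∀ y, y ∈ E → ∑ l, k' l * y * (∑ i, z i l * a₀ i) =
              ∑ i, k' i * (k * y) * a₀ i := by
            intro y hy
            have hexp : ∀ l, k' l * y * (∑ i, z i l * a₀ i) =
                ∑ i, k' l * y * (z i l * a₀ i) := fun l => Finset.mul_sum _ _ _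
            rw [Finset.sum_congr rfl fun l _ => hexp l, Finset.sum_comm]
            refine Finset.sum_congr rfl fun i _ => ?_
            have hstep : ∀ l, k' l * y * (z i l * a₀ i) = (z i l * k' l) * (y * a₀ i) := by
              intro l
              have hcm : z i l * (k' l * y) = (k' l * y) * z i l :=
                (hzprop i l).2 _ (Subring.mul_mem _ (hKE (hk' l)) hy)
              calc k' l * y * (z i l * a₀ i) = ((k' l * y) * z i l) * a₀ i := by
                    simp only [mul_assoc]
              _ = (z i l * (k' l * y)) * a₀ i := by rw [← hcm]
              _ = (z i l * k' l) * (y * a₀ i) := by simp only [mul_assoc]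
            rw [Finset.sum_congr rfl fun l _ => hstep l, ← Finset.sum_mul, ← hzrepr i]
            simp only [mul_assoc]
          have hA'zero : ∀ j, ∑ l, k' l * Fin.tail v j * (∑ i, z i l * a₀ i) = 0 := by
            intro j
            rw [key _ (hv' j), op_k_mul hKcomm hk' a₀ hk, hzero₀ j, mul_zero]
          have hA'w : ∑ l, k' l * v 0 * (∑ i, z i l * a₀ i) = k := by
            rw [key _ (hv 0), op_k_mul hKcomm hk' a₀ hk, hone₀, mul_one]
          have hA'x : ∑ l, k' l * x * (∑ i, z i l * a₀ i) = k * ∑ i, k' i * x * a₀ i := by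
            rw [key _ hx, op_k_mul hKcomm hk' a₀ hk]
          have := claim1 _ ha'E hA'zero
          rw [hA'x, hA'w] at this
          exact this.symm
        exfalso
        by_cases hmem : x - (∑ i, k' i * x * a₀ i) * v 0 ∈
            Submodule.span K (Set.range (Fin.tail v))
        · apply hxspan
          have h1 : x = (x - (∑ i, k' i * x * a₀ i) * v 0) + (∑ i, k' i * x * a₀ i) * v 0 := by
            abel
          rw [h1]
          refine Submodule.add_mem _ ?_ ?_
          · refine Submodule.span_mono ?_ hmem
            rw [hrange]
            exact Set.subset_insert _ _
          · have hsm : (∑ i, k' i * x * a₀ i) * v 0 = (⟨_, hcK⟩ : K) • v 0 := rfl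
            rw [hsm]
            exact Submodule.smul_mem _ _ (Submodule.subset_span ⟨0, rfl⟩)
        · obtain ⟨a, ha, hz, h1'⟩ := ih (Fin.tail v) hv'
            (x - (∑ i, k' i * x * a₀ i) * v 0)
            (Subring.sub_mem _ hx (Subring.mul_mem _ hcE (hv 0))) hmem
          have hxa := claim1 a ha hz
          have hsplit : ∑ i, k' i * (x - (∑ i, k' i * x * a₀ i) * v 0) * a i =
              (∑ i, k' i * x * a i) -
                ∑ i, k' i * ((∑ i, k' i * x * a₀ i) * v 0) * a i := by
            rw [← Finset.sum_sub_distrib]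
            refine Finset.sum_congr rfl fun i _ => ?_
            rw [mul_sub, sub_mul]
          rw [hsplit, hxa, op_k_mul hKcomm hk' a hcK, sub_self] at h1'
          exact one_ne_zero h1'.symm

end Density

section Span

variable {E K : Subring D}
variable {n : ℕ} {k' : Fin n → D}

/-- A division subring has a division ring structure. -/
@[reducible]
noncomputable def subDivisionRing (K : Subring D) (hKdiv : IsDivisionSubring K) :
    DivisionRing ↥K :=
  { (inferInstance : Ring ↥K) with
    inv := fun x => ⟨(x : D)⁻¹, hKdiv x x.2⟩
    exists_pair_ne := ⟨0, 1, by
      intro h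
      have : (0 : D) = 1 := congrArg Subtype.val h
      exact zero_ne_one this⟩
    mul_inv_cancel := fun a ha => by
      apply Subtype.ext
      have ha' : (a : D) ≠ 0 := fun h => ha (Subtype.ext h)
      exact mul_inv_cancel₀ ha'
    inv_zero := by
      apply Subtype.ext
      exact inv_zero
    nnqsmul := _
    qsmul := _ }

/-- A commutative division subring has a field structure. -/
@[reducible]
noncomputable def subField (K : Subring D) (hKdiv : IsDivisionSubring K)
    (hKcomm : ∀ x ∈ K, ∀ y ∈ K, x * y = y * x) : Field ↥K :=
  { subDivisionRing K hKdiv with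
    mul_comm := fun a b => Subtype.ext (hKcomm _ a.2 _ b.2) }

lemma not_linearIndependent_of_density (hKE : K ≤ E) (hEdiv : IsDivisionSubring E)
    (hKcomm : ∀ x ∈ K, ∀ y ∈ K, x * y = y * x)
    (hCEK : ∀ x ∈ E, (∀ k ∈ K, x * k = k * x) → x ∈ K)
    (hk' : ∀ i, k' i ∈ K)
    (hspan : ∀ c ∈ K, ∃ z : Fin n → D,
      (∀ i, z i ∈ E ∧ ∀ y ∈ E, z i * y = y * z i) ∧ c = ∑ i, z i * k' i)
    (w : Fin (n + 1) → D) (hw : ∀ j, w j ∈ E) : ¬ LinearIndependent K w := by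
  classical
  intro hind
  have hdual : ∀ j : Fin (n + 1), ∃ a : Fin n → D, (∀ i, a i ∈ E) ∧
      (∀ l, ∑ i, k' i * w l * a i = if l = j then 1 else 0) := by
    intro j
    have hnot : w j ∉ Submodule.span K (Set.range (w ∘ j.succAbove)) := by
      have himg : Set.range (w ∘ j.succAbove) = w '' {j}ᶜ := by
        rw [Set.range_comp, Fin.range_succAbove]
      rw [himg]
      exact hind.notMem_span_image (by simp)
    obtain ⟨a, ha, hz, h1⟩ := density hKE hEdiv hKcomm hCEK hk' hspan n (w ∘ j.succAbove)
      (fun l => hw _) (w j) (hw j) hnot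
    refine ⟨a, ha, fun l => ?_⟩
    by_cases hlj : l = j
    · subst hlj
      rw [if_pos rfl]
      exact h1
    · obtain ⟨t, ht⟩ := Fin.exists_succAbove_eq hlj
      rw [if_neg hlj, ← ht]
      exact hz t
  choose A hAE hAval using hdual
  have hRA : (Matrix.of fun l i => k' i * w l) * (Matrix.of fun i (j : Fin (n+1)) => A j i)
      = (1 : Matrix (Fin (n+1)) (Fin (n+1)) D) := by
    ext l j
    rw [Matrix.mul_apply]
    have hterm : ∀ i, (Matrix.of fun l i => k' i * w l) l i *
        (Matrix.of fun i (j : Fin (n+1)) => A j i) i j = k' i * w l * A j i := fun i => rfl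
    rw [Finset.sum_congr rfl fun i _ => hterm i, hAval j l]
    by_cases hlj : l = j
    · subst hlj
      rw [if_pos rfl, Matrix.one_apply_eq]
    · rw [if_neg hlj, (Matrix.one_apply_ne hlj)]
  have hinv : ∀ u : Fin (n+1) → D,
      Matrix.vecMul (Matrix.vecMul u (Matrix.of fun l i => k' i * w l))
        (Matrix.of fun i (j : Fin (n+1)) => A j i) = u := by
    intro u
    rw [Matrix.vecMul_vecMul, hRA, Matrix.vecMul_one]
  have hinj : Function.Injective
      ⇑(Matrix.vecMulLinear (Matrix.of fun l i => k' i * w l)) := by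
    intro u u' huu
    have h1 := hinv u
    have h2 := hinv u'
    rw [← h1, ← h2]
    simp only [Matrix.vecMulLinear_apply] at huu
    rw [huu]
  have hle := LinearMap.finrank_le_finrank_of_injective hinj
  rw [Module.finrank_fin_fun, Module.finrank_fin_fun] at hle
  omega

lemma exists_finite_span (hKdiv : IsDivisionSubring K) (hKE : K ≤ E)
    (hEdiv : IsDivisionSubring E)
    (hKcomm : ∀ x ∈ K, ∀ y ∈ K, x * y = y * x)
    (hCEK : ∀ x ∈ E, (∀ k ∈ K, x * k = k * x) → x ∈ K)
    (hk' : ∀ i, k' i ∈ K)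
    (hspan : ∀ c ∈ K, ∃ z : Fin n → D,
      (∀ i, z i ∈ E ∧ ∀ y ∈ E, z i * y = y * z i) ∧ c = ∑ i, z i * k' i) :
    ∃ (m : ℕ) (b : Fin m → D), (∀ j, b j ∈ E) ∧
      ∀ x ∈ E, ∃ c : Fin m → D, (∀ j, c j ∈ K) ∧ x = ∑ j, c j * b j := by
  letI : DivisionRing ↥K := subDivisionRing K hKdiv
  let V : Submodule K D :=
    { carrier := E
      add_mem' := fun ha hb => Subring.add_mem _ ha hb
      zero_mem' := Subring.zero_mem _
      smul_mem' := fun c x hx => by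
        show (c : D) * x ∈ E
        exact Subring.mul_mem _ (hKE c.2) hx }
  have hmemV : ∀ x : D, x ∈ V ↔ x ∈ E := fun x => Iff.rfl
  have hrank : Module.rank K V ≤ n := by
    apply rank_le
    intro s hs
    by_contra hcard
    push_neg at hcard
    have hle : n + 1 ≤ s.card := hcard
    let e : Fin s.card ≃ {x // x ∈ s} := s.equivFin.symm
    let g : Fin (n + 1) → ↥V := fun t => (e (Fin.castLE hle t) : ↥V)
    have hginj : Function.Injective fun t : Fin (n+1) => e (Fin.castLE hle t) := by
      intro t t' htt
      have := e.injective htt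
      exact Fin.castLE_injective hle this
    have hindep : LinearIndependent K g := hs.comp _ hginj
    have hindep2 : LinearIndependent K (⇑V.subtype ∘ g) :=
      hindep.map' V.subtype (Submodule.ker_subtype V)
    exact not_linearIndependent_of_density hKE hEdiv hKcomm hCEK hk' hspan
      (⇑V.subtype ∘ g) (fun j => (g j).2) hindep2
  have hfin : Module.Finite K V := by
    rw [← Module.rank_lt_aleph0_iff]
    exact lt_of_le_of_lt hrank (Cardinal.nat_lt_aleph0 n)
  obtain ⟨m, bV, hbV⟩ := @Module.Finite.exists_fin _ _ _ _ _ hfin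
  refine ⟨m, fun j => (bV j : D), fun j => (bV j).2, fun x hx => ?_⟩
  have hxV : (⟨x, hx⟩ : ↥V) ∈ Submodule.span K (Set.range bV) := by
    rw [hbV]; trivial
  rw [Submodule.mem_span_range_iff_exists_fun] at hxV
  obtain ⟨c, hc⟩ := hxV
  refine ⟨fun j => (c j : D), fun j => (c j).2, ?_⟩
  have hcoe := congrArg (Subtype.val : ↥V → D) hc
  rw [AddSubmonoidClass.coe_finset_sum] at hcoe
  exact hcoe.symm

end Span

section FieldPart

set_option synthInstance.maxHeartbeats 4000000 in
set_option maxHeartbeats 16000000 in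
/-- Finite spanning of `K` over `L` when `K` is generated over `L` by finitely many
algebraic elements. -/
lemma exists_L_span {K L : Subring D} (hKdiv : IsDivisionSubring K)
    (hKcomm : ∀ x ∈ K, ∀ y ∈ K, x * y = y * x)
    (hLdiv : IsDivisionSubring L) (hLK : L ≤ K)
    {S₀ : Set D} (hS₀fin : S₀.Finite) (hS₀K : S₀ ⊆ (K : Set D))
    (halg : ∀ a : D, IsAlgebraic (↥(Subring.center D)) a)
    (hcL : Subring.center D ≤ L)
    (hgen : ∀ M : Subring D, IsDivisionSubring M → S₀ ⊆ (M : Set D) → L ≤ M → K ≤ M) :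
    ∃ (n : ℕ) (k' : Fin n → D), (∀ i, k' i ∈ K) ∧
      ∀ c ∈ K, ∃ z : Fin n → D, (∀ i, z i ∈ L) ∧ c = ∑ i, z i * k' i := by
  classical
  letI instK : Field ↥K := subField K hKdiv hKcomm
  let Lsub : Subfield ↥K :=
    { carrier := {x : ↥K | (x : D) ∈ L}
      mul_mem' := fun {a b} ha hb => Subring.mul_mem _ ha hb
      one_mem' := Subring.one_mem _
      add_mem' := fun {a b} ha hb => Subring.add_mem _ ha hb
      zero_mem' := Subring.zero_mem _
      neg_mem' := fun {a} ha => Subring.neg_mem _ ha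
      inv_mem' := fun a ha => by
        show ((a : D))⁻¹ ∈ L
        exact hLdiv _ ha }
  -- the coefficient ring hom from the center into Lsub
  let ψ : ↥(Subring.center D) →+* ↥Lsub :=
    { toFun := fun c => ⟨⟨(c : D), hLK (hcL c.2)⟩, hcL c.2⟩
      map_one' := rfl
      map_mul' := fun a b => rfl
      map_add' := fun a b => rfl
      map_zero' := rfl }
  have hψinj : Function.Injective ⇑ψ := by
    intro a b hab
    have : ((a : D)) = (b : D) := congrArg (fun t : ↥Lsub => (((t : ↥K) : D))) hab
    exact Subtype.ext this
  have hcompeq : (K.subtype).comp ((algebraMap ↥Lsub ↥K).comp ψ)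
      = algebraMap ↥(Subring.center D) D := by
    ext c
    rfl
  -- every element of K is integral over Lsub
  have hint : ∀ x : ↥K, IsIntegral ↥Lsub x := by
    intro x
    obtain ⟨p, hp0, hpev⟩ := halg (x : D)
    refine IsAlgebraic.isIntegral ⟨p.map ψ, (Polynomial.map_ne_zero_iff hψinj).mpr hp0, ?_⟩
    apply Subtype.val_injective (p := fun y => y ∈ K)
    have h1 : (Polynomial.aeval x (p.map ψ)) =
        Polynomial.eval₂ ((algebraMap ↥Lsub ↥K).comp ψ) x p := by
      rw [Polynomial.aeval_def, Polynomial.eval₂_map]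
    have h2 := Polynomial.hom_eval₂ p ((algebraMap ↥Lsub ↥K).comp ψ) (K.subtype) x
    show (K.subtype) (Polynomial.aeval x (p.map ψ)) = _
    rw [h1, h2, hcompeq]
    show Polynomial.aeval ((x : D)) p = ((0 : ↥K) : D)
    rw [hpev]
    rfl
  let S₀K : Set ↥K := {x : ↥K | (x : D) ∈ S₀}
  have hS₀Kfin : S₀K.Finite := by
    have hpre : S₀K = (Subtype.val : ↥K → D) ⁻¹' S₀ := rfl
    rw [hpre]
    exact Set.Finite.preimage (Set.injOn_of_injective Subtype.val_injective) hS₀fin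
  haveI : Finite ↥S₀K := hS₀Kfin.to_subtype
  haveI hFD : FiniteDimensional ↥Lsub ↥(IntermediateField.adjoin ↥Lsub S₀K) :=
    IntermediateField.finiteDimensional_adjoin (fun x _ => hint x)
  have hKMf : ∀ x : ↥K, x ∈ IntermediateField.adjoin ↥Lsub S₀K := by
    intro x
    set Mf := IntermediateField.adjoin ↥Lsub S₀K with hMf
    let M' : Subring D := Subring.map K.subtype Mf.toSubalgebra.toSubring
    have hM'div : IsDivisionSubring M' := by
      rintro y hy
      rw [Subring.mem_map] at hy
      obtain ⟨u, hu, rfl⟩ := hy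
      refine Subring.mem_map.mpr ⟨u⁻¹, ?_, rfl⟩
      show u⁻¹ ∈ Mf
      exact inv_mem (show u ∈ Mf from hu)
    have hS₀M' : S₀ ⊆ (M' : Set D) := by
      intro s hs
      refine Subring.mem_map.mpr ⟨⟨s, hS₀K hs⟩, ?_, rfl⟩
      show (⟨s, hS₀K hs⟩ : ↥K) ∈ Mf
      exact IntermediateField.subset_adjoin _ _ hs
    have hLM' : L ≤ M' := by
      intro l hl
      refine Subring.mem_map.mpr ⟨⟨l, hLK hl⟩, ?_, rfl⟩
      show (⟨l, hLK hl⟩ : ↥K) ∈ Mf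
      exact Mf.algebraMap_mem (⟨⟨l, hLK hl⟩, hl⟩ : ↥Lsub)
    have hKM' := hgen M' hM'div hS₀M' hLM'
    have hxM : (x : D) ∈ M' := hKM' x.2
    rw [Subring.mem_map] at hxM
    obtain ⟨u, hu, huv⟩ := hxM
    have : u = x := Subtype.ext huv
    rw [← this]
    exact hu
  obtain ⟨nn, κ, hκ⟩ := Module.Finite.exists_fin (R := ↥Lsub)
    (M := ↥(IntermediateField.adjoin ↥Lsub S₀K))
  refine ⟨nn, fun i => ((κ i : ↥K) : D), fun i => ((κ i : ↥K)).2, fun c hc => ?_⟩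
  have hmem : (⟨⟨c, hc⟩, hKMf ⟨c, hc⟩⟩ : ↥(IntermediateField.adjoin ↥Lsub S₀K)) ∈
      Submodule.span ↥Lsub (Set.range κ) := by
    rw [hκ]; trivial
  rw [Submodule.mem_span_range_iff_exists_fun] at hmem
  obtain ⟨zz, hzz⟩ := hmem
  refine ⟨fun i => ((zz i : ↥K) : D), fun i => (zz i).2, ?_⟩
  have h1 := congrArg (fun t : ↥(IntermediateField.adjoin ↥Lsub S₀K) => ((t : ↥K) : D)) hzz
  simp only [AddSubmonoidClass.coe_finset_sum] at h1
  exact h1.symm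

end FieldPart

/-- If `D` is strongly algebraic over its center `F` and `T ⊆ D` is finite, then there is a
division subring of `D` containing `F ∪ T` which is centrally finite. -/
theorem stmt7 (D : Type u) [DivisionRing D] (h : IsStronglyAlgebraic D) (T : Finset D) :
    ∃ E : Subring D, IsDivisionSubring E ∧ Subring.center D ≤ E ∧ (T : Set D) ⊆ E ∧
      IsCentrallyFiniteSubring E := by
  classical
  obtain ⟨halg, K, S, hKmax, hSK, hKgen, hfin⟩ := h
  have hKdiv := hKmax.1
  have hKcomm := hKmax.2.1
  have hcenterK := hKmax.2.2.1
  set S₀ : Set D := ⋃ t ∈ (T : Set D), {y ∈ S | t * y ≠ y * t} with hS₀def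
  have hS₀fin : S₀.Finite := Set.Finite.biUnion T.finite_toSet (fun t _ => hfin t)
  have hS₀S : S₀ ⊆ S := by
    intro y hy
    rw [hS₀def, Set.mem_iUnion₂] at hy
    obtain ⟨t, ht, hy1, hy2⟩ := hy
    exact hy1
  set E : Subring D := Subring.centralizer ((S \ S₀ : Set D)) with hEdef
  have hEdiv : IsDivisionSubring E := centralizer_isDivisionSubring _
  have hcenterE : Subring.center D ≤ E := by
    intro c hc
    rw [hEdef, Subring.mem_centralizer_iff]
    intro g hg
    exact Subring.mem_center_iff.mp hc g
  have hTE : (T : Set D) ⊆ (E : Set D) := by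
    intro t ht
    rw [SetLike.mem_coe, hEdef, Subring.mem_centralizer_iff]
    intro g hg
    by_contra hne
    have : g ∈ S₀ := by
      rw [hS₀def, Set.mem_iUnion₂]
      exact ⟨t, ht, hg.1, fun hcomm => hne hcomm.symm⟩
    exact hg.2 this
  have hKE : K ≤ E := by
    intro k hk
    rw [hEdef, Subring.mem_centralizer_iff]
    intro g hg
    exact hKcomm _ (hSK hg.1) _ hk
  have hCEK : ∀ x ∈ E, (∀ k ∈ K, x * k = k * x) → x ∈ K :=
    fun x _ hcomm => mem_of_centralizes hKmax hcomm
  set L : Subring D := divClosure D ((Subring.center D : Set D) ∪ (S \ S₀)) with hLdef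
  have hLdiv : IsDivisionSubring L := divClosure_isDivisionSubring _
  have hcL : Subring.center D ≤ L := fun c hc => subset_divClosure _ (Or.inl hc)
  have hSS₀L : (S \ S₀ : Set D) ⊆ (L : Set D) := fun y hy => subset_divClosure _ (Or.inr hy)
  have hLK : L ≤ K := by
    rw [hKgen, hLdef]
    exact divClosure_mono
      (Set.union_subset_union_right _ Set.diff_subset)
  have hLE : L ≤ E := by
    rw [hLdef]
    refine divClosure_le ?_ hEdiv
    rintro x (hx | hx)
    · exact hcenterE hx
    · rw [SetLike.mem_coe, hEdef, Subring.mem_centralizer_iff]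
      intro g hg
      exact hKcomm _ (hSK hg.1) _ (hSK hx.1)
  have hLcent : L ≤ Subring.centralizer (E : Set D) := by
    rw [hLdef]
    refine divClosure_le ?_ (centralizer_isDivisionSubring _)
    rintro x (hx | hx)
    · rw [SetLike.mem_coe, Subring.mem_centralizer_iff]
      intro g hg
      exact Subring.mem_center_iff.mp hx g
    · rw [SetLike.mem_coe, Subring.mem_centralizer_iff]
      intro g hg
      have hg' := Subring.mem_centralizer_iff.mp (show g ∈ E by rw [hEdef]; exact hg)
      exact (hg' x hx).symm
  have hLcE : ∀ z ∈ L, ∀ y ∈ E, z * y = y * z := by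
    intro z hz y hy
    have hz' := Subring.mem_centralizer_iff.mp (hLcent hz)
    exact (hz' y hy).symm
  have hgen : ∀ M : Subring D, IsDivisionSubring M → S₀ ⊆ (M : Set D) → L ≤ M → K ≤ M := by
    intro M hMdiv hS₀M hLM
    rw [hKgen]
    refine divClosure_le ?_ hMdiv
    rintro x (hx | hx)
    · exact hLM (hcL hx)
    · by_cases hx0 : x ∈ S₀
      · exact hS₀M hx0
      · exact hLM (hSS₀L ⟨hx, hx0⟩)
  obtain ⟨n, k', hk', hspanL⟩ := exists_L_span hKdiv hKcomm hLdiv hLK hS₀fin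
    (fun y hy => hSK (hS₀S hy)) halg hcL hgen
  have hspan : ∀ c ∈ K, ∃ z : Fin n → D,
      (∀ i, z i ∈ E ∧ ∀ y ∈ E, z i * y = y * z i) ∧ c = ∑ i, z i * k' i := by
    intro c hc
    obtain ⟨z, hzL, hrep⟩ := hspanL c hc
    exact ⟨z, fun i => ⟨hLE (hzL i), fun y hy => hLcE _ (hzL i) y hy⟩, hrep⟩
  obtain ⟨m, b, hbE, hbspan⟩ := exists_finite_span hKdiv hKE hEdiv hKcomm hCEK hk' hspan
  refine ⟨E, hEdiv, hcenterE, hTE, ?_⟩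
  refine ⟨Finset.image (fun p : Fin m × Fin n => k' p.2 * b p.1) Finset.univ, ?_, ?_⟩
  · intro d hd
    rw [Finset.coe_image] at hd
    obtain ⟨p, -, rfl⟩ := hd
    exact SetLike.mem_coe.mpr (Subring.mul_mem _ (hKE (hk' p.2)) (hbE p.1))
  · intro x hx
    obtain ⟨c, hcK, hxc⟩ := hbspan x hx
    choose z hzL hzrep using fun j => hspanL (c j) (hcK j)
    set cfun : D → D := fun d =>
      ∑ p ∈ Finset.univ.filter (fun p : Fin m × Fin n => k' p.2 * b p.1 = d), z p.1 p.2
      with hcfun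
    have hcompat : ∀ p ∈ (Finset.univ : Finset (Fin m × Fin n)),
        (fun d => cfun d * d) ((fun p : Fin m × Fin n => k' p.2 * b p.1) p) =
          ∑ q ∈ Finset.univ.filter
            (fun q : Fin m × Fin n => (fun p : Fin m × Fin n => k' p.2 * b p.1) q =
              (fun p : Fin m × Fin n => k' p.2 * b p.1) p),
            z q.1 q.2 * (k' q.2 * b q.1) := by
      intro p _
      show cfun (k' p.2 * b p.1) * (k' p.2 * b p.1) = _
      rw [hcfun]
      rw [Finset.sum_mul]
      refine Finset.sum_congr rfl fun q hq => ?_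
      have hqe : k' q.2 * b q.1 = k' p.2 * b p.1 := (Finset.mem_filter.mp hq).2
      rw [hqe]
    have himg := Finset.sum_image'
      (f := fun d => cfun d * d)
      (fun p : Fin m × Fin n => z p.1 p.2 * (k' p.2 * b p.1)) hcompat
    refine ⟨cfun, ?_, ?_⟩
    · intro d hd
      constructor
      · exact Subring.sum_mem _ fun p _ => hLE (hzL p.1 p.2)
      · intro y hy
        rw [hcfun, Finset.sum_mul, Finset.mul_sum]
        exact Finset.sum_congr rfl fun p _ => hLcE _ (hzL p.1 p.2) y hy
    · calc x = ∑ j, c j * b j := hxc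
      _ = ∑ j, ∑ i, z j i * k' i * b j :=
          Finset.sum_congr rfl fun j _ => by rw [hzrep j, Finset.sum_mul]
      _ = ∑ p : Fin m × Fin n, z p.1 p.2 * (k' p.2 * b p.1) := by
          rw [← Finset.univ_product_univ, Finset.sum_product]
          exact Finset.sum_congr rfl fun j _ => Finset.sum_congr rfl fun i _ => mul_assoc _ _ _
      _ = ∑ d ∈ Finset.image (fun p : Fin m × Fin n => k' p.2 * b p.1) Finset.univ,
            cfun d * d := himg.symm
end

section
/- Let D be a locally linear division ring with center F. Then the center of the derived group D' = [D*, D*] is a torsion group. -/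
universe u

/-- An element of a division ring commuting with all its conjugates is central. -/
lemma central_of_commute_conj {D : Type*} [DivisionRing D] (z : D)
    (hz : ∀ x : D, x ≠ 0 → Commute z (x * z * x⁻¹)) (x : D) : Commute z x := by
  by_cases hx : x = 0
  · simp [hx]
  by_cases hx1 : 1 + x = 0
  · have hxm : x = -1 := by
      have := neg_eq_of_add_eq_zero_right hx1
      simpa using this.symm
    rw [hxm]
    exact (Commute.one_right z).neg_right
  set k' := x * z * x⁻¹ with hk'def
  set k := (1 + x) * z * (1 + x)⁻¹ with hkdef
  have hk' : Commute z k' := hz x hx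
  have hk : Commute z k := hz (1 + x) hx1
  have e1 : k' * x = x * z := by
    rw [hk'def, mul_assoc, inv_mul_cancel₀ hx, mul_one]
  have e2 : k * (1 + x) = (1 + x) * z := by
    rw [hkdef, mul_assoc, inv_mul_cancel₀ hx1, mul_one]
  have e2' : k + k * x = z + k' * x := by
    rw [e1]
    calc k + k * x = k * (1 + x) := by rw [mul_add, mul_one]
    _ = (1 + x) * z := e2
    _ = z + x * z := by rw [add_mul, one_mul]
  have e3 : k - z = (k' - k) * x := by
    rw [sub_mul, sub_eq_sub_iff_add_eq_add, add_comm (k' * x) z]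
    exact e2'
  by_cases hkk : k' = k
  · have hkz : k = z := by
      rw [hkk, sub_self, zero_mul] at e3
      exact sub_eq_zero.mp e3
    have h4 : z * (1 + x) = (1 + x) * z := by rw [← hkz]; exact hkz ▸ e2
    rw [mul_add, add_mul, mul_one, one_mul] at h4
    exact add_left_cancel h4
  · have h0 : k' - k ≠ 0 := sub_ne_zero.mpr hkk
    have hxeq : x = (k' - k)⁻¹ * (k - z) := by
      rw [e3, ← mul_assoc, inv_mul_cancel₀ h0, one_mul]
    have c1 : Commute z (k' - k) := hk'.sub_right hk
    have c2 : Commute z (k' - k)⁻¹ := c1.inv_right₀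
    have c3 : Commute z (k - z) := hk.sub_right (Commute.refl z)
    rw [hxeq]
    exact c2.mul_right c3

/-- Every element of the commutator subgroup is a product of a list of commutators. -/
lemma exists_commutator_list {G : Type*} [Group G] {w : G} (hw : w ∈ commutator G) :
    ∃ l : List G, (∀ x ∈ l, x ∈ commutatorSet G) ∧ l.prod = w := by
  rw [commutator_eq_closure] at hw
  induction hw using Subgroup.closure_induction with
  | mem x hx => exact ⟨[x], by simpa using hx, by simp⟩
  | one => exact ⟨[], by simp, by simp⟩
  | mul x y hx hy ihx ihy =>
    obtain ⟨l₁, h₁, p₁⟩ := ihx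
    obtain ⟨l₂, h₂, p₂⟩ := ihy
    refine ⟨l₁ ++ l₂, ?_, by rw [List.prod_append, p₁, p₂]⟩
    intro a ha
    rcases List.mem_append.mp ha with hmem | hmem
    exacts [h₁ a hmem, h₂ a hmem]
  | inv x hx ih =>
    obtain ⟨l, hl, pl⟩ := ih
    refine ⟨(l.map fun g => g⁻¹).reverse, ?_, by rw [← List.prod_inv_reverse, pl]⟩
    intro a ha
    rw [List.mem_reverse, List.mem_map] at ha
    obtain ⟨g, hg, rfl⟩ := ha
    obtain ⟨g₁, g₂, rfl⟩ := hl g hg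
    exact ⟨g₂, g₁, (commutatorElement_inv g₁ g₂).symm⟩

open commutatorElement

set_option maxHeartbeats 1000000 in
set_option synthInstance.maxHeartbeats 400000 in
/-- If `D` is a locally linear division ring, then the center of the derived group
`D' = [D*, D*]` is a torsion group. -/
theorem stmt10 (D : Type u) [DivisionRing D] (h : IsLocallyLinear D) :
    Monoid.IsTorsion (Subgroup.center ↥(commutator Dˣ)) := by
  classical
  intro z
  set w : Dˣ := z.1.1 with hwdef
  have hw : (w : Dˣ) ∈ commutator Dˣ := z.1.2
  -- Step A: `w` commutes with all its conjugates
  have hconj : ∀ u : Dˣ, Commute w (u * w * u⁻¹) := by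
    intro u
    have hmem : ⁅(w : Dˣ), u⁆ ∈ commutator Dˣ :=
      Subgroup.commutator_mem_commutator (Subgroup.mem_top w) (Subgroup.mem_top u)
    have h0 := Subgroup.mem_center_iff.mp z.2 ⟨⁅(w : Dˣ), u⁆, hmem⟩
    have h1 : ⁅(w : Dˣ), u⁆ * w = w * ⁅(w : Dˣ), u⁆ := congrArg Subtype.val h0
    have h2 : u * w⁻¹ * u⁻¹ * w = w * (u * w⁻¹ * u⁻¹) := by
      apply mul_left_cancel (a := w)
      calc w * (u * w⁻¹ * u⁻¹ * w) = ⁅(w : Dˣ), u⁆ * w := by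
            rw [commutatorElement_def]; group
        _ = w * ⁅(w : Dˣ), u⁆ := h1
        _ = w * (w * (u * w⁻¹ * u⁻¹)) := by rw [commutatorElement_def]; group
    have h3 : Commute w (u * w⁻¹ * u⁻¹) := h2.symm
    have h4 := h3.inv_right
    have h5 : (u * w⁻¹ * u⁻¹)⁻¹ = u * w * u⁻¹ := by group
    rwa [h5] at h4
  -- Step A': `w` is central in `D`
  have hcen : ∀ x : D, Commute (w : D) x := by
    apply central_of_commute_conj
    intro x hx
    have hcc := (hconj (Units.mk0 x hx)).map (Units.coeHom D)
    simpa [Units.coeHom] using hcc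
  -- Step B: write `w` as a product of commutators
  obtain ⟨l, hl, hlp⟩ := exists_commutator_list hw
  choose a b hab using fun i : {x // x ∈ l} => hl i.1 i.2
  -- Step C: apply local linearity
  let LS : List D := l.attach.flatMap fun i =>
    [((a i : Dˣ) : D), (((a i)⁻¹ : Dˣ) : D), ((b i : Dˣ) : D), (((b i)⁻¹ : Dˣ) : D)]
  obtain ⟨E, hSE, hEdiv, ⟨emb⟩⟩ := h LS.toFinset
  have hmemE : ∀ d ∈ LS, d ∈ E := fun d hd =>
    hSE (Finset.mem_coe.mpr (List.mem_toFinset.mpr hd))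
  have hmem4 : ∀ i : {x // x ∈ l}, ((a i : Dˣ) : D) ∈ E ∧ (((a i)⁻¹ : Dˣ) : D) ∈ E ∧
      ((b i : Dˣ) : D) ∈ E ∧ (((b i)⁻¹ : Dˣ) : D) ∈ E := by
    intro i
    refine ⟨?_, ?_, ?_, ?_⟩ <;>
      · apply hmemE
        simp only [LS, List.mem_flatMap]
        exact ⟨i, List.mem_attach _ _, by simp⟩
  have hxE : ∀ i : {x // x ∈ l}, ((i.1 : Dˣ) : D) ∈ E := by
    intro i
    rw [← hab i, commutatorElement_def]
    obtain ⟨h1, h2, h3, h4⟩ := hmem4 i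
    simp only [Units.val_mul]
    exact mul_mem (mul_mem (mul_mem h1 h3) h2) h4
  have hwE : ((w : Dˣ) : D) ∈ E := by
    rw [← hlp]
    have hcoe : ((l.prod : Dˣ) : D) = (l.map (Units.coeHom D)).prod :=
      map_list_prod (Units.coeHom D) l
    rw [hcoe]
    apply list_prod_mem
    intro x hx
    obtain ⟨g, hg, rfl⟩ := List.mem_map.mp hx
    exact hxE ⟨g, hg⟩
  -- Step D: pass to the centrally finite division ring
  letI : DivisionRing emb.L := emb.instL
  haveI hfin : Module.Finite (Subring.center emb.L) emb.L := emb.cf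
  let f : ↥E →+* emb.L := emb.f
  let k := Subring.center emb.L
  let M : Subalgebra k emb.L := Algebra.adjoin k (Set.range f)
  let z' : emb.L := f ⟨((w : Dˣ) : D), hwE⟩
  have hz'range : z' ∈ Set.range f := ⟨_, rfl⟩
  have hz'M : z' ∈ M := Algebra.subset_adjoin hz'range
  have hcommrange : ∀ y ∈ Set.range f, Commute z' y := by
    rintro _ ⟨e, rfl⟩
    have he : (⟨((w : Dˣ) : D), hwE⟩ : ↥E) * e = e * ⟨((w : Dˣ) : D), hwE⟩ :=
      Subtype.ext (hcen e.1)
    show z' * f e = f e * z'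
    rw [← map_mul, ← map_mul, he]
  have hMcomm : ∀ m ∈ M, Commute z' m := by
    have hle : M ≤ Subalgebra.centralizer k {z'} := by
      apply Algebra.adjoin_le
      intro y hy
      rw [SetLike.mem_coe, Subalgebra.mem_centralizer_iff]
      intro g hg
      rw [Set.mem_singleton_iff] at hg
      subst hg
      exact hcommrange y hy
    intro m hm
    exact ((Subalgebra.mem_centralizer_iff k).mp (hle hm) z' rfl)
  let K : Subalgebra k emb.L := Algebra.adjoin k {z'}
  have hKM : K ≤ M := Algebra.adjoin_mono (Set.singleton_subset_iff.mpr hz'range)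
  letI : CommRing ↥K := Algebra.adjoinCommRingOfComm k (by
    rintro x hx y hy
    rw [Set.mem_singleton_iff] at hx hy
    subst hx; subst hy; rfl)
  haveI hfdM : FiniteDimensional k ↥M := inferInstance
  haveI hfdK : FiniteDimensional k ↥K := inferInstance
  have hKfield : IsField ↥K := by
    refine ⟨⟨0, 1, zero_ne_one⟩, mul_comm, ?_⟩
    intro x hx
    obtain ⟨u, rfl⟩ := FiniteDimensional.isUnit k (K := ↥K) hx
    exact ⟨↑u⁻¹, u.mul_inv⟩
  letI : Field ↥K := hKfield.toField
  have hKcentral : ∀ c ∈ K, ∀ m ∈ M, c * m = m * c := by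
    have hle : K ≤ Subalgebra.centralizer k (M : Set emb.L) := by
      apply Algebra.adjoin_le
      intro y hy
      rw [Set.mem_singleton_iff] at hy
      subst hy
      rw [SetLike.mem_coe, Subalgebra.mem_centralizer_iff]
      intro g hg
      exact (hMcomm g hg).symm
    intro c hc m hm
    exact ((Subalgebra.mem_centralizer_iff k).mp (hle hc) m hm).symm
  letI : Algebra ↥K ↥M := RingHom.toAlgebra'
    (Subalgebra.inclusion hKM)
    (fun c x => Subtype.ext (hKcentral c.1 c.2 x.1 x.2))
  haveI : IsScalarTower ↥k ↥K ↥M := IsScalarTower.of_algebraMap_eq' rfl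
  haveI : Module.Finite ↥K ↥M := Module.Finite.of_restrictScalars_finite k ↥K ↥M
  set d := Module.finrank ↥K ↥M with hddef
  have hd : 0 < d := Module.finrank_pos
  -- the norm map
  let N : ↥M →* ↥K := Algebra.norm ↥K
  let F : ↥E →+* ↥M := f.codRestrict M.toSubring
    (fun e => Algebra.subset_adjoin ⟨e, rfl⟩)
  let z'' : ↥K := ⟨z', Algebra.subset_adjoin rfl⟩
  have halg : algebraMap ↥K ↥M z'' = F ⟨((w : Dˣ) : D), hwE⟩ := rfl
  have hnormw : N (F ⟨((w : Dˣ) : D), hwE⟩) = z'' ^ d := by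
    rw [← halg]
    exact Algebra.norm_algebraMap z''
  -- norm of the image of each commutator is 1
  have hnorm1 : ∀ i : {x // x ∈ l}, N (F ⟨((i.1 : Dˣ) : D), hxE i⟩) = 1 := by
    intro i
    obtain ⟨h1, h2, h3, h4⟩ := hmem4 i
    have hfac : (⟨((i.1 : Dˣ) : D), hxE i⟩ : ↥E) =
        ⟨((a i : Dˣ) : D), h1⟩ * ⟨((b i : Dˣ) : D), h3⟩ *
          ⟨(((a i)⁻¹ : Dˣ) : D), h2⟩ * ⟨(((b i)⁻¹ : Dˣ) : D), h4⟩ := by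
      apply Subtype.ext
      show ((i.1 : Dˣ) : D) = _
      rw [← hab i, commutatorElement_def]
      simp [Units.val_mul]
    have ha1 : (⟨((a i : Dˣ) : D), h1⟩ : ↥E) * ⟨(((a i)⁻¹ : Dˣ) : D), h2⟩ = 1 := by
      apply Subtype.ext
      show ((a i : Dˣ) : D) * (((a i)⁻¹ : Dˣ) : D) = 1
      rw [← Units.val_mul, mul_inv_cancel, Units.val_one]
    have hb1 : (⟨((b i : Dˣ) : D), h3⟩ : ↥E) * ⟨(((b i)⁻¹ : Dˣ) : D), h4⟩ = 1 := by
      apply Subtype.ext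
      show ((b i : Dˣ) : D) * (((b i)⁻¹ : Dˣ) : D) = 1
      rw [← Units.val_mul, mul_inv_cancel, Units.val_one]
    have hNa : N (F ⟨((a i : Dˣ) : D), h1⟩) * N (F ⟨(((a i)⁻¹ : Dˣ) : D), h2⟩) = 1 := by
      rw [← map_mul, ← map_mul, ha1, map_one, map_one]
    have hNb : N (F ⟨((b i : Dˣ) : D), h3⟩) * N (F ⟨(((b i)⁻¹ : Dˣ) : D), h4⟩) = 1 := by
      rw [← map_mul, ← map_mul, hb1, map_one, map_one]
    rw [hfac]
    simp only [map_mul]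
    calc N (F ⟨((a i : Dˣ) : D), h1⟩) * N (F ⟨((b i : Dˣ) : D), h3⟩) *
          N (F ⟨(((a i)⁻¹ : Dˣ) : D), h2⟩) * N (F ⟨(((b i)⁻¹ : Dˣ) : D), h4⟩)
        = (N (F ⟨((a i : Dˣ) : D), h1⟩) * N (F ⟨(((a i)⁻¹ : Dˣ) : D), h2⟩)) *
          (N (F ⟨((b i : Dˣ) : D), h3⟩) * N (F ⟨(((b i)⁻¹ : Dˣ) : D), h4⟩)) := by ring
      _ = 1 := by rw [hNa, hNb, one_mul]
  -- `w` is the product of images of the commutators, so its norm is 1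
  have hwprod : (⟨((w : Dˣ) : D), hwE⟩ : ↥E) =
      (l.attach.map fun i => (⟨((i.1 : Dˣ) : D), hxE i⟩ : ↥E)).prod := by
    apply Subtype.ext
    show ((w : Dˣ) : D) = _
    rw [SubmonoidClass.coe_list_prod, List.map_map, ← hlp]
    have hcoe2 : ((l.prod : Dˣ) : D) = (l.map (Units.coeHom D)).prod :=
      map_list_prod (Units.coeHom D) l
    rw [hcoe2]
    congr 1
    conv_lhs => rw [← List.attach_map_subtype_val l]
    rw [List.map_map]
    rfl
  have hnormw1 : N (F ⟨((w : Dˣ) : D), hwE⟩) = 1 := by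
    rw [hwprod, map_list_prod, map_list_prod, List.map_map, List.map_map]
    apply List.prod_eq_one
    intro x hx
    obtain ⟨i, _, rfl⟩ := List.mem_map.mp hx
    exact hnorm1 i
  -- conclude
  have hpow : z'' ^ d = 1 := by rw [← hnormw, hnormw1]
  have hz'pow : z' ^ d = 1 := by
    have := congrArg Subtype.val hpow
    simpa [z'', SubmonoidClass.coe_pow] using this
  have hEpow : (⟨((w : Dˣ) : D), hwE⟩ : ↥E) ^ d = 1 := by
    apply emb.inj
    rw [map_pow, map_one]
    exact hz'pow
  have hDpow : ((w : Dˣ) : D) ^ d = 1 := by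
    have := congrArg Subtype.val hEpow
    simpa [SubmonoidClass.coe_pow] using this
  have hwpow : (w : Dˣ) ^ d = 1 := by
    apply Units.ext
    rw [Units.val_pow_eq_pow_val, Units.val_one]
    exact hDpow
  refine isOfFinOrder_iff_pow_eq_one.mpr ⟨d, hd, ?_⟩
  apply Subtype.ext
  apply Subtype.ext
  show ((w : Dˣ) : Dˣ) ^ d = 1
  exact hwpow
end

section
/- Let D be a division ring with center F, n ≥ 1, and identify F* with scalar matrices in GL_n(D). Then Z(SL_n(D)) = { dI : d ∈ F*, dⁿ ∈ D' } is a torsion group if and only if Z(D') is a torsion group, where D' = [D*, D*]. -/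
universe u

lemma comm_inv {D : Type u} [DivisionRing D] {z a : D} (h : z * a = a * z) :
    z * a⁻¹ = a⁻¹ * z := by
  rcases eq_or_ne a 0 with rfl | ha
  · simp
  · have : a⁻¹ * (z * a) * a⁻¹ = a⁻¹ * (a * z) * a⁻¹ := by rw [h]
    rw [mul_assoc, mul_assoc, mul_inv_cancel₀ ha, mul_one, ← mul_assoc,
      inv_mul_cancel₀ ha, one_mul] at this
    exact this.symm

lemma central_of_comm_conj {D : Type u} [DivisionRing D] (z : D)
    (h : ∀ x : D, x ≠ 0 → z * (x * z * x⁻¹) = (x * z * x⁻¹) * z) :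
    ∀ d : D, z * d = d * z := by
  intro d
  by_contra hc
  have hd : d ≠ 0 := by rintro rfl; simp at hc
  have hd1 : d + 1 ≠ 0 := by
    intro h1
    have : d = -1 := by
      have := congrArg (· - 1) h1
      simpa [sub_eq_iff_eq_add] using this
    subst this; simp at hc
  set w := d * z * d⁻¹ with hw
  set w' := (d + 1) * z * (d + 1)⁻¹ with hw'
  have hzw : z * w = w * z := h d hd
  have hzw' : z * w' = w' * z := h (d + 1) hd1
  have hwd : w * d = d * z := by
    rw [hw, mul_assoc, inv_mul_cancel₀ hd, mul_one]
  have hw'd : w' * d + w' = d * z + z := by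
    have : w' * (d + 1) = (d + 1) * z := by
      rw [hw', mul_assoc, inv_mul_cancel₀ hd1, mul_one]
    rw [mul_add, mul_one, add_mul, one_mul] at this
    exact this
  have key : (w' - w) * d = z - w' := by
    rw [sub_mul, hwd]
    have : w' * d = d * z + z - w' := by
      rw [← hw'd]; abel
    rw [this]; abel
  have hne : w' - w ≠ 0 := by
    intro h0
    have hz : z = w' := by
      have : z - w' = 0 := by rw [← key, h0, zero_mul]
      exact sub_eq_zero.mp this
    apply hc
    have h2 : z * (d + 1) = (d + 1) * z := by
      have hw'd1 : w' * (d + 1) = (d + 1) * z := by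
        rw [hw', mul_assoc, inv_mul_cancel₀ hd1, mul_one]
      calc z * (d + 1) = w' * (d + 1) := by rw [← hz]
        _ = (d + 1) * z := hw'd1
    have := h2
    rw [mul_add, mul_one, add_mul, one_mul] at this
    exact add_right_cancel this
  have hsub : z * (w' - w) = (w' - w) * z := by
    rw [mul_sub, sub_mul, hzw, hzw']
  have hzsub : z * (z - w') = (z - w') * z := by
    rw [mul_sub, sub_mul, hzw']
  have hdval : d = (w' - w)⁻¹ * (z - w') := by
    rw [← key, ← mul_assoc, inv_mul_cancel₀ hne, one_mul]
  apply hc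
  rw [hdval, ← mul_assoc, comm_inv hsub, mul_assoc, hzsub, ← mul_assoc]

open scoped commutatorElement

/-- `Z(SL_n(D)) = { dI : d ∈ F*, dⁿ ∈ D' }` is a torsion group iff `Z(D')` is a torsion
group, where `D' = [D*, D*]`. -/
theorem stmt14 (D : Type u) [DivisionRing D] (n : ℕ) (hn : 1 ≤ n) :
    (∀ A : (Matrix (Fin n) (Fin n) D)ˣ,
        (∃ d : Dˣ, A.val = Matrix.diagonal (fun _ => (d : D)) ∧
          (d : D) ∈ Subring.center D ∧ d ^ n ∈ commutator Dˣ) → IsOfFinOrder A) ↔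
      Monoid.IsTorsion (Subgroup.center ↥(commutator Dˣ)) := by
  haveI : NeZero n := ⟨by omega⟩
  constructor
  · intro H z
    set u : Dˣ := z.val.val with hu
    -- u commutes with all of D'
    have hcomm : ∀ g : Dˣ, g ∈ commutator Dˣ → u * g = g * u := by
      intro g hg
      have := z.2.comm ⟨g, hg⟩
      have h2 := congrArg Subtype.val this
      simpa [hu] using h2
    -- u is central in D
    have hcent : (u : D) ∈ Subring.center D := by
      rw [Subring.mem_center_iff]
      intro g
      refine (central_of_comm_conj (u : D) ?_ g).symm
      intro x hx
      set xu : Dˣ := Units.mk0 x hx with hxu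
      have hmem : ⁅xu, u⁆ ∈ commutator Dˣ := by
        rw [commutator_def]
        exact Subgroup.commutator_mem_commutator (Subgroup.mem_top _) (Subgroup.mem_top _)
      have h1 : u * ⁅xu, u⁆ = ⁅xu, u⁆ * u := hcomm _ hmem
      have h2 : u * (xu * u * xu⁻¹) = (xu * u * xu⁻¹) * u := by
        have := congrArg (· * u) h1
        simp only [commutatorElement_def] at this h1 ⊢
        calc u * (xu * u * xu⁻¹) = u * (xu * u * xu⁻¹ * u⁻¹) * u := by group
          _ = xu * u * xu⁻¹ * u⁻¹ * u * u := by rw [h1]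
          _ = xu * u * xu⁻¹ * u := by group
      have := congrArg Units.val h2
      simpa [hxu] using this
    -- build the scalar matrix unit
    set A : (Matrix (Fin n) (Fin n) D)ˣ :=
      { val := Matrix.diagonal (fun _ => (u : D))
        inv := Matrix.diagonal (fun _ => ((u⁻¹ : Dˣ) : D))
        val_inv := by rw [Matrix.diagonal_mul_diagonal]; simp
        inv_val := by rw [Matrix.diagonal_mul_diagonal]; simp } with hA
    have hfin : IsOfFinOrder A := by
      refine H A ⟨u, rfl, hcent, ?_⟩
      exact pow_mem z.val.2 n
    obtain ⟨k, hk, hAk⟩ := isOfFinOrder_iff_pow_eq_one.mp hfin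
    refine isOfFinOrder_iff_pow_eq_one.mpr ⟨k, hk, ?_⟩
    have hval : (A ^ k).val = Matrix.diagonal (fun _ => ((u : D) ^ k)) := by
      rw [Units.val_pow_eq_pow_val, hA]
      exact Matrix.diagonal_pow _ k
    have huk : (u : D) ^ k = 1 := by
      have h1 : (A ^ k).val = 1 := by rw [hAk]; rfl
      rw [hval] at h1
      have := congrArg (fun M => M ⟨0, by omega⟩ ⟨0, by omega⟩) h1
      simpa [Matrix.diagonal_apply_eq, Matrix.one_apply_eq] using this
    ext
    push_cast
    exact huk
  · intro H A ⟨d, hAval, hdc, hdn⟩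
    -- d^n is in the center of D'
    have hmem : (⟨d ^ n, hdn⟩ : ↥(commutator Dˣ)) ∈
        Subgroup.center ↥(commutator Dˣ) := by
      rw [Subgroup.mem_center_iff]
      intro g
      ext
      have hcomm : ∀ x : D, x * (d : D) = (d : D) * x := Subring.mem_center_iff.mp hdc
      have : ((g : Dˣ) : D) * ((d : D)) ^ n = ((d : D)) ^ n * ((g : Dˣ) : D) :=
        (Commute.pow_right (hcomm _) n)
      push_cast
      simpa using this
    obtain ⟨k, hk, hzk⟩ := isOfFinOrder_iff_pow_eq_one.mp (H ⟨⟨d ^ n, hdn⟩, hmem⟩)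
    refine isOfFinOrder_iff_pow_eq_one.mpr ⟨n * k, by positivity, ?_⟩
    have hd1 : d ^ (n * k) = 1 := by
      have := congrArg (Subtype.val ∘ Subtype.val) hzk
      simpa [pow_mul, SubmonoidClass.coe_pow] using this
    ext i j
    rw [Units.val_pow_eq_pow_val, hAval, Matrix.diagonal_pow]
    have : ((d : D)) ^ (n * k) = 1 := by
      have := congrArg Units.val hd1
      simpa using this
    simp [Matrix.diagonal_apply, Pi.pow_apply, this, Matrix.one_apply]
end

section
/- Let D be a division ring of positive characteristic p whose center F is algebraic over the prime field F_p, and suppose D is algebraic over F. Then D is commutative (Jacobson's theorem application). -/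
open Polynomial in
private lemma jacProdXSubC (K : Type*) [Field K] [Fintype K] :
    (X ^ Fintype.card K - X : K[X]) = ∏ a : K, (X - C a) := by
  classical
  have hm : (X ^ Fintype.card K - X : K[X]).Monic := by
    apply monic_X_pow_sub
    calc (X : K[X]).degree = 1 := degree_X
    _ < (Fintype.card K : WithBot ℕ) := by exact_mod_cast Fintype.one_lt_card
  have hcard : Multiset.card (X ^ Fintype.card K - X : K[X]).roots
      = (X ^ Fintype.card K - X : K[X]).natDegree := by
    rw [FiniteField.roots_X_pow_card_sub_X, FiniteField.X_pow_card_sub_X_natDegree_eq K Fintype.one_lt_card]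
    simp [Finset.card_univ]
  have h := prod_multiset_X_sub_C_of_monic_of_roots_card_eq hm hcard
  rw [← h, FiniteField.roots_X_pow_card_sub_X, Finset.prod_eq_multiset_prod]

private lemma jacCommuteAdjoin {p : ℕ} [Fact p.Prime] {D : Type*} [DivisionRing D]
    [Algebra (ZMod p) D] {b c : D} (hc : c ∈ Algebra.adjoin (ZMod p) {b}) :
    Commute b c := by
  have h : Algebra.adjoin (ZMod p) {b} ≤ Subalgebra.centralizer (ZMod p) {b} := by
    apply Algebra.adjoin_le
    intro x hx
    rw [Set.mem_singleton_iff] at hx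
    subst hx
    exact Subalgebra.mem_centralizer_iff _ |>.mpr (fun y hy => by rw [Set.mem_singleton_iff] at hy; rw [hy])
  exact (Subalgebra.mem_centralizer_iff _).mp (h hc) b rfl

private lemma jacAdjoinFinite {p : ℕ} [Fact p.Prime] {D : Type*} [DivisionRing D]
    [Algebra (ZMod p) D] [Algebra.IsAlgebraic (ZMod p) D] (b : D) :
    Finite (Algebra.adjoin (ZMod p) {b}) := by
  have hint : IsIntegral (ZMod p) b := ((inferInstance : Algebra.IsAlgebraic (ZMod p) D).isAlgebraic b).isIntegral
  have : Module.Finite (ZMod p) (Algebra.adjoin (ZMod p) {b}) :=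
    Module.Finite.iff_fg.mpr hint.fg_adjoin_singleton
  exact Module.finite_of_finite (ZMod p)

private lemma jacPowEqOne {p : ℕ} [Fact p.Prime] {D : Type*} [DivisionRing D]
    [Algebra (ZMod p) D] [Algebra.IsAlgebraic (ZMod p) D] (b : D) (hb : b ≠ 0) :
    ∃ s, 0 < s ∧ b ^ s = 1 := by
  haveI := jacAdjoinFinite (p := p) b
  letI : Field (Algebra.adjoin (ZMod p) {b}) := (Finite.isDomain_to_isField _).toField
  letI : Fintype (Algebra.adjoin (ZMod p) {b}) := Fintype.ofFinite _
  have hcoe : ∀ (x : Algebra.adjoin (ZMod p) {b}) (n : ℕ), ((x ^ n : _) : D) = (x : D) ^ n := by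
    intro x n
    induction n with
    | zero => rfl
    | succ n ih => rw [pow_succ, pow_succ, ← ih]; rfl
  have hb'0 : (⟨b, Algebra.self_mem_adjoin_singleton _ b⟩ : Algebra.adjoin (ZMod p) {b}) ≠ 0 := by
    intro h0
    exact hb (congrArg Subtype.val h0)
  have h := FiniteField.pow_card_sub_one_eq_one _ hb'0
  refine ⟨Fintype.card (Algebra.adjoin (ZMod p) {b}) - 1,
    by have := Fintype.one_lt_card (α := Algebra.adjoin (ZMod p) {b}); omega, ?_⟩
  have h2 := congrArg Subtype.val h
  rw [hcoe] at h2
  exact h2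

set_option synthInstance.maxHeartbeats 1000000 in
set_option maxHeartbeats 2000000 in
private lemma jacEigen {p : ℕ} [Fact p.Prime] {D : Type*} [DivisionRing D] [Algebra (ZMod p) D]
    (K : Subalgebra (ZMod p) D) [Finite K] {a : D} (haK : a ∈ K)
    (hcm : ∀ c ∈ K, a * c = c * a) {y0 : D} (hxy : a * y0 ≠ y0 * a) :
    ∃ lam : K, lam ≠ 0 ∧ ∃ u : D, u ≠ 0 ∧ a * u - u * a = (lam : D) * u := by
  classical
  letI : Field K := (Finite.isDomain_to_isField _).toField
  letI : Fintype K := Fintype.ofFinite _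
  haveI : CharP D p := charP_of_injective_ringHom (algebraMap (ZMod p) D).injective p
  haveI : CharP K p := charP_of_injective_ringHom (algebraMap (ZMod p) K).injective p
  obtain ⟨n, -, hcard⟩ := FiniteField.card K p
  -- CharP for the endomorphism ring
  haveI : CharP (Module.End K D) p := by
    refine ⟨fun m => ?_⟩
    rw [← CharP.cast_eq_zero_iff D p m]
    constructor
    · intro h
      have h1 : ((m : Module.End K D)) (1 : D) = 0 := by rw [h]; rfl
      rwa [Module.End.natCast_apply, nsmul_eq_mul, mul_one] at h1
    · intro h
      apply LinearMap.ext
      intro t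
      rw [Module.End.natCast_apply, LinearMap.zero_apply, nsmul_eq_mul, h, zero_mul]
  -- the two multiplication operators
  have hcomm' : ∀ (c : K) (t : D), a * ((c : D) * t) = (c : D) * (a * t) := fun c t => by
    rw [← mul_assoc, hcm c c.2, mul_assoc]
  let La : Module.End K D :=
    { toFun := fun t => a * t
      map_add' := fun s t => mul_add a s t
      map_smul' := fun c t => hcomm' c t }
  let Ra : Module.End K D :=
    { toFun := fun t => t * a
      map_add' := fun s t => add_mul s t a
      map_smul' := fun c t => by
        show ((c : D) * t) * a = (c : D) * (t * a)
        rw [mul_assoc] }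
  have hLaRa : Commute La Ra := LinearMap.ext fun t => (mul_assoc a t a).symm
  set δ : Module.End K D := La - Ra with hδdef
  have hδapp : ∀ t, δ t = a * t - t * a := fun t => rfl
  have hδne : δ ≠ 0 := by
    intro h
    apply hxy
    have h1 : δ y0 = 0 := by rw [h]; rfl
    rw [hδapp, sub_eq_zero] at h1
    exact h1
  -- coercion pow lemma for K
  have hcoe : ∀ (z : K) (m : ℕ), ((z ^ m : K) : D) = (z : D) ^ m := by
    intro z m
    induction m with
    | zero => rfl
    | succ m ih => rw [pow_succ, pow_succ, ← ih]; rfl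
  have haq : a ^ Fintype.card K = a := by
    have h1 := congrArg Subtype.val (FiniteField.pow_card (⟨a, haK⟩ : K))
    rwa [hcoe] at h1
  have hLapow : ∀ (m : ℕ) (t : D), (La ^ m) t = a ^ m * t := by
    intro m
    induction m with
    | zero => intro t; simp
    | succ m ih =>
      intro t
      rw [pow_succ, Module.End.mul_apply]
      show (La ^ m) (a * t) = a ^ (m + 1) * t
      rw [ih, ← mul_assoc, ← pow_succ]
  have hRapow : ∀ (m : ℕ) (t : D), (Ra ^ m) t = t * a ^ m := by
    intro m
    induction m with
    | zero => intro t; simp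
    | succ m ih =>
      intro t
      rw [pow_succ, Module.End.mul_apply]
      show (Ra ^ m) (t * a) = t * a ^ (m + 1)
      rw [ih, mul_assoc, ← pow_succ']
  have hδq : δ ^ Fintype.card K = δ := by
    rw [hcard, hδdef, sub_pow_char_pow_of_commute p (n : ℕ) hLaRa]
    apply LinearMap.ext
    intro t
    rw [LinearMap.sub_apply, LinearMap.sub_apply, hLapow, hRapow]
    rw [show (p : ℕ) ^ (n : ℕ) = Fintype.card K from hcard.symm, haq]
    rfl
  -- single factors
  have hfactor : ∀ lam : K, Polynomial.aeval δ (Polynomial.X - Polynomial.C lam)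
      = δ - algebraMap K (Module.End K D) lam := by
    intro lam
    rw [map_sub, Polynomial.aeval_X, Polynomial.aeval_C]
  -- the product of all factors annihilates
  have hprod : Polynomial.aeval δ
      ((∏ lam ∈ Finset.univ.erase (0 : K), (Polynomial.X - Polynomial.C lam)) * Polynomial.X) = 0 := by
    have h1 : ((∏ lam ∈ Finset.univ.erase (0 : K), (Polynomial.X - Polynomial.C lam))
        * Polynomial.X : Polynomial K) = ∏ lam : K, (Polynomial.X - Polynomial.C lam) := by
      calc (∏ lam ∈ Finset.univ.erase (0 : K), (Polynomial.X - Polynomial.C lam)) * Polynomial.X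
          = (∏ lam ∈ Finset.univ.erase (0 : K), (Polynomial.X - Polynomial.C lam))
              * (Polynomial.X - Polynomial.C (0 : K)) := by rw [map_zero, sub_zero]
        _ = ∏ lam : K, (Polynomial.X - Polynomial.C lam) :=
            Finset.prod_erase_mul _ _ (Finset.mem_univ (0 : K))
    rw [h1, ← jacProdXSubC K, map_sub, map_pow, Polynomial.aeval_X, hδq, sub_self]
  by_contra hno
  push_neg at hno
  -- each factor with lam ≠ 0 is injective
  have hinj : ∀ lam : K, lam ≠ 0 →
      Function.Injective ⇑(δ - algebraMap K (Module.End K D) lam) := by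
    intro lam hlam
    rw [injective_iff_map_eq_zero]
    intro t ht
    by_contra ht0
    apply hno lam hlam t ht0
    rw [LinearMap.sub_apply, Module.algebraMap_end_apply, sub_eq_zero] at ht
    rw [hδapp] at ht
    rw [ht]; rfl
  have hPinj : ∀ s : Finset K, (0 : K) ∉ s →
      Function.Injective ⇑(Polynomial.aeval δ
        (∏ lam ∈ s, (Polynomial.X - Polynomial.C lam)) : Module.End K D) := by
    intro s hs
    induction s using Finset.induction_on with
    | empty =>
      rw [Finset.prod_empty, map_one]
      intro x y h
      simpa using h
    | @insert c s hcs ih =>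
      rw [Finset.prod_insert hcs, map_mul, Module.End.coe_mul]
      have h0c : c ≠ 0 := fun h => hs (h ▸ Finset.mem_insert_self c s)
      have h0s : (0 : K) ∉ s := fun h => hs (Finset.mem_insert_of_mem h)
      rw [hfactor]
      exact (hinj c h0c).comp (ih h0s)
  have hsplit : (Polynomial.aeval δ
      (∏ lam ∈ Finset.univ.erase (0 : K), (Polynomial.X - Polynomial.C lam)) : Module.End K D)
        * δ = 0 := by
    have h := hprod
    rwa [map_mul, Polynomial.aeval_X] at h
  apply hδne
  apply LinearMap.ext
  intro t
  have h3 : (Polynomial.aeval δ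
      (∏ lam ∈ Finset.univ.erase (0 : K), (Polynomial.X - Polynomial.C lam)) : Module.End K D)
        (δ t) = 0 := by
    have := congrArg (fun g : Module.End K D => g t) hsplit
    simpa [Module.End.mul_apply] using this
  have h4 := hPinj (Finset.univ.erase (0 : K)) (Finset.notMem_erase _ _)
    (h3.trans (map_zero _).symm)
  rw [h4]; rfl
set_option maxHeartbeats 1000000 in
private theorem jacMain (p : ℕ) [Fact p.Prime] (D : Type*) [DivisionRing D]
    [Algebra (ZMod p) D] [Algebra.IsAlgebraic (ZMod p) D] (x y : D) : x * y = y * x := by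
  classical
  by_contra hxy
  haveI : Finite (Algebra.adjoin (ZMod p) {x}) := jacAdjoinFinite (p := p) x
  obtain ⟨lam, hlam, u, hu, heq⟩ := jacEigen (Algebra.adjoin (ZMod p) {x})
    (Algebra.self_mem_adjoin_singleton _ x)
    (fun c hc => ((jacCommuteAdjoin (p := p) hc) : x * c = c * x)) hxy
  -- centrality of the prime field
  have hcentral : ∀ (r : ZMod p) (t : D), algebraMap (ZMod p) D r * t = t * algebraMap (ZMod p) D r := by
    intro r t
    have h1 : algebraMap (ZMod p) D r = ((r.val : ℕ) : D) := by
      conv_lhs => rw [← ZMod.natCast_rightInverse r]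
      rw [map_natCast]
    rw [h1]
    exact (Nat.cast_commute _ _).eq
  -- conjugation by u maps K into K
  have hK : ∀ c ∈ Algebra.adjoin (ZMod p) {x},
      ∃ d ∈ Algebra.adjoin (ZMod p) {x}, u * c = d * u := by
    intro c hc
    induction hc using Algebra.adjoin_induction with
    | mem c hc =>
      rw [Set.mem_singleton_iff] at hc
      subst hc
      refine ⟨c - lam, sub_mem (Algebra.self_mem_adjoin_singleton _ c) lam.2, ?_⟩
      rw [sub_mul, ← heq, sub_sub_cancel]
    | algebraMap r =>
      exact ⟨algebraMap (ZMod p) D r, Subalgebra.algebraMap_mem _ r, (hcentral r u).symm⟩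
    | add c c' hc hc' ihc ihc' =>
      obtain ⟨d, hd, hud⟩ := ihc
      obtain ⟨d', hd', hud'⟩ := ihc'
      exact ⟨d + d', add_mem hd hd', by rw [mul_add, hud, hud', add_mul]⟩
    | mul c c' hc hc' ihc ihc' =>
      obtain ⟨d, hd, hud⟩ := ihc
      obtain ⟨d', hd', hud'⟩ := ihc'
      refine ⟨d * d', mul_mem hd hd', ?_⟩
      rw [← mul_assoc, hud, mul_assoc, hud', ← mul_assoc]
  -- conjugation by powers of u
  have hKpow : ∀ (i : ℕ), ∀ c ∈ Algebra.adjoin (ZMod p) {x},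
      ∃ d ∈ Algebra.adjoin (ZMod p) {x}, u ^ i * c = d * u ^ i := by
    intro i
    induction i with
    | zero => intro c hc; exact ⟨c, hc, by simp⟩
    | succ i ih =>
      intro c hc
      obtain ⟨d, hd, hud⟩ := hK c hc
      obtain ⟨d', hd', hud'⟩ := ih d hd
      refine ⟨d', hd', ?_⟩
      rw [pow_succ, mul_assoc, hud, ← mul_assoc, hud', mul_assoc, ← pow_succ]
  -- u has finite multiplicative order
  obtain ⟨s, hs0, hus⟩ := jacPowEqOne (p := p) u hu
  have hupow : ∀ m : ℕ, u ^ m = u ^ (m % s) := by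
    intro m
    conv_lhs => rw [← Nat.div_add_mod m s]
    rw [pow_add, pow_mul, hus, one_pow, one_mul]
  -- the finite generating set
  set M : Set D := {t | ∃ c ∈ Algebra.adjoin (ZMod p) {x}, ∃ i : ℕ, i < s ∧ t = c * u ^ i}
    with hM
  have hMfin : M.Finite := by
    have hsub : M ⊆ (fun q : (Algebra.adjoin (ZMod p) {x}) × Fin s =>
        (q.1 : D) * u ^ (q.2 : ℕ)) '' Set.univ := by
      rintro t ⟨c, hc, i, hi, rfl⟩
      exact ⟨(⟨c, hc⟩, ⟨i, hi⟩), Set.mem_univ _, rfl⟩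
    exact Set.Finite.subset (Set.finite_univ.image _) hsub
  have hMmem : ∀ c ∈ Algebra.adjoin (ZMod p) {x}, ∀ i : ℕ, c * u ^ i ∈ M := by
    intro c hc i
    exact ⟨c, hc, i % s, Nat.mod_lt _ hs0, by rw [← hupow]⟩
  have h1M : (1 : D) ∈ M := by simpa using hMmem 1 (one_mem _) 0
  have hxM : x ∈ M := by simpa using hMmem x (Algebra.self_mem_adjoin_singleton _ x) 0
  have huM : u ∈ M := by simpa using hMmem 1 (one_mem _) 1
  have hMmul : ∀ t ∈ M, ∀ t' ∈ M, t * t' ∈ M := by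
    rintro t ⟨c, hc, i, hi, rfl⟩ t' ⟨d, hd, j, hj, rfl⟩
    obtain ⟨d', hd', hud⟩ := hKpow i d hd
    have h1 : c * u ^ i * (d * u ^ j) = (c * d') * u ^ (i + j) := by
      rw [mul_assoc c, ← mul_assoc (u ^ i) d, hud, pow_add]
      simp only [mul_assoc]
    rw [h1]
    exact hMmem _ (mul_mem hc hd') _
  -- span is closed under multiplication
  have hTmul : ∀ t ∈ Submodule.span (ZMod p) M, ∀ t' ∈ Submodule.span (ZMod p) M,
      t * t' ∈ Submodule.span (ZMod p) M := by
    intro t ht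
    induction ht using Submodule.span_induction with
    | mem w hw =>
      intro t' ht'
      induction ht' using Submodule.span_induction with
      | mem w' hw' => exact Submodule.subset_span (hMmul _ hw _ hw')
      | zero => rw [mul_zero]; exact zero_mem _
      | add y z hy hz ihy ihz => rw [mul_add]; exact add_mem ihy ihz
      | smul r y hy ihy => rw [mul_smul_comm]; exact Submodule.smul_mem _ r ihy
    | zero => intro t' ht'; rw [zero_mul]; exact zero_mem _
    | add y z hy hz ihy ihz =>
      intro t' ht'
      rw [add_mul]
      exact add_mem (ihy t' ht') (ihz t' ht')
    | smul r y hy ihy =>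
      intro t' ht'
      rw [smul_mul_assoc]
      exact Submodule.smul_mem _ r (ihy t' ht')
  -- the finite subring
  let S : Subring D :=
    { carrier := ↑(Submodule.span (ZMod p) M)
      mul_mem' := fun ha hb => hTmul _ ha _ hb
      one_mem' := Submodule.subset_span h1M
      add_mem' := fun ha hb => Submodule.add_mem _ ha hb
      zero_mem' := Submodule.zero_mem _
      neg_mem' := fun ha => Submodule.neg_mem _ ha }
  haveI : Finite S := by
    haveI : Module.Finite (ZMod p) (Submodule.span (ZMod p) M) :=
      FiniteDimensional.span_of_finite _ hMfin
    haveI : Finite (Submodule.span (ZMod p) M) := Module.finite_of_finite (ZMod p)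
    exact Finite.of_equiv _ (Equiv.subtypeEquivRight (fun t => Iff.rfl))
  have hfield := Finite.isDomain_to_isField S
  have hc2 := hfield.mul_comm ⟨x, Submodule.subset_span hxM⟩ ⟨u, Submodule.subset_span huM⟩
  have hcomm2 : x * u = u * x := congrArg Subtype.val hc2
  rw [hcomm2, sub_self] at heq
  have hlam' : (lam : D) ≠ 0 := fun h => hlam (Subtype.ext h)
  exact (mul_ne_zero hlam' hu) heq.symm

/-- Let `D` be a division ring of characteristic `p > 0` whose center `F` is algebraic over
the prime field `F_p`, and suppose `D` is algebraic over `F`.  Then `D` is commutative. -/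
theorem stmt19 (D : Type*) [DivisionRing D] (p : ℕ) (hp : p.Prime) (hchar : CharP D p)
    (hFalg : ∀ x ∈ Subring.center D, ∃ f : Polynomial ℤ,
      f.map (Int.castRingHom (ZMod p)) ≠ 0 ∧ Polynomial.aeval x f = 0)
    (hDalg : ∀ a : D, IsAlgebraic (Subring.center D) a) :
    ∀ x y : D, x * y = y * x := by
  haveI := Fact.mk hp
  haveI := hchar
  letI : Algebra (ZMod p) D := ZMod.algebra D p
  letI : Algebra (ZMod p) (Subring.center D) := ZMod.algebra _ p
  haveI : @IsScalarTower (ZMod p) (Subring.center D) D Algebra.toSMul Algebra.toSMul Algebra.toSMul :=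
    IsScalarTower.of_algebraMap_eq' (Subsingleton.elim _ _)
  haveI : Algebra.IsAlgebraic (Subring.center D) D := ⟨hDalg⟩
  haveI : Algebra.IsAlgebraic (ZMod p) (Subring.center D) := by
    refine ⟨fun z => ?_⟩
    obtain ⟨f, hf0, hfz⟩ := hFalg (z : D) z.2
    refine ⟨f.map (Int.castRingHom (ZMod p)), hf0, ?_⟩
    have h1 : ((Polynomial.aeval z (f.map (Int.castRingHom (ZMod p)))) : D) = 0 := by
      show (Subring.center D).subtype (Polynomial.aeval z (f.map (Int.castRingHom (ZMod p)))) = 0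
      rw [Polynomial.aeval_def, Polynomial.hom_eval₂]
      rw [show ((Subring.center D).subtype).comp (algebraMap (ZMod p) (Subring.center D))
        = algebraMap (ZMod p) D from Subsingleton.elim _ _]
      rw [Polynomial.eval₂_map]
      rw [show (algebraMap (ZMod p) D).comp (Int.castRingHom (ZMod p))
        = algebraMap ℤ D from Subsingleton.elim _ _]
      rw [← Polynomial.aeval_def]
      exact hfz
    exact Subtype.ext h1
  haveI : Algebra.IsAlgebraic (ZMod p) D :=
    Algebra.IsAlgebraic.trans (R := ZMod p) (S := Subring.center D) (A := D)
  exact jacMain p D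
end
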